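/- arXiv:1804.04442 — 3 statements merged into one kernel-verified Lean document; each statement's English description precedes it below -/
import Mathlib

section
/- Suppose d is odd and one of the following holds: (a) η(e0) = η(e1) = η(e2) = 1; (b) exactly two of η(e0), η(e1), η(e2) equal -1 and the third equals 1; or (c) exactly two of η(e0), η(e1), η(e2) equal -1 and the third equals 0. Then the number of points (x0 : x1 : x2) ∈ ℙ²(F_q) with C(x0, x1, x2) = 0 equals (3q² - 12q + 33)/8; equivalently, writing n = (q-1)/2, it equals n(n + q - 1)/2 - 3(n - 2)/2. -/
open MvPolynomial

/-- The polynomial `C = X0^d + X1^d + X2^d + (e0·X0 + e1·X1 + e2·X2)^d` over `F_q`. -/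
noncomputable def fermatSlice (F : Type) [Field F] (d : ℕ) (e0 e1 e2 : F) :
    MvPolynomial (Fin 3) F :=
  X 0 ^ d + X 1 ^ d + X 2 ^ d +
    (MvPolynomial.C e0 * X 0 + MvPolynomial.C e1 * X 1 + MvPolynomial.C e2 * X 2) ^ d

namespace Statement14Aux


def g00 (u0 u1 : ℤ) : ℤ := (8) + (-8) * u1 * u1 + (-4) * u0 * u1 + (-8) * u0 * u0 + (12) * u0 * u0 * u1 * u1
def g01 (u0 u1 : ℤ) : ℤ := (-4) * u1 + (-4) * u0 + (4) * u0 * u1 * u1 + (4) * u0 * u0 * u1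
def g02 (u0 u1 : ℤ) : ℤ := (-8) + (12) * u1 * u1 + (4) * u0 * u1 + (12) * u0 * u0 + (-20) * u0 * u0 * u1 * u1
def g10 (u0 u1 : ℤ) : ℤ := (-4) * u1 + (-4) * u0 + (4) * u0 * u1 * u1 + (4) * u0 * u0 * u1
def g11 (u0 u1 : ℤ) : ℤ := (-4) + (4) * u1 * u1 + (3) * u0 * u1 + (4) * u0 * u0 + (-5) * u0 * u0 * u1 * u1
def g12 (u0 u1 : ℤ) : ℤ := (4) * u1 + (4) * u0 + (-5) * u0 * u1 * u1 + (-5) * u0 * u0 * u1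
def g20 (u0 u1 : ℤ) : ℤ := (-8) + (12) * u1 * u1 + (4) * u0 * u1 + (12) * u0 * u0 + (-20) * u0 * u0 * u1 * u1
def g21 (u0 u1 : ℤ) : ℤ := (4) * u1 + (4) * u0 + (-5) * u0 * u1 * u1 + (-5) * u0 * u0 * u1
def g22 (u0 u1 : ℤ) : ℤ := (12) + (-20) * u1 * u1 + (-5) * u0 * u1 + (-20) * u0 * u0 + (35) * u0 * u0 * u1 * u1

def Gpoly (u0 u1 v w : ℤ) : ℤ := g00 u0 u1 + g01 u0 u1 * w + g02 u0 u1 * w^2 + g10 u0 u1 * v + g11 u0 u1 * (v * w) + g12 u0 u1 * (v * w^2) + g20 u0 u1 * v^2 + g21 u0 u1 * (v^2 * w) + g22 u0 u1 * (v^2 * w^2)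

def PP (q w2 u0 u1 : ℤ) : ℤ := (-8) + (16) * u1 * u1 + (2) * u0 * u1 + (16) * u0 * u0 + (-30) * u0 * u0 * u1 * u1 + (4) * w2 + (-4) * w2 * u1 * u1 + (-3) * w2 * u0 * u1 + (-4) * w2 * u0 * u0 + (5) * w2 * u0 * u0 * u1 * u1 + (4) * q + (-4) * q * u1 * u1 + (-1) * q * u0 * u1 + (-4) * q * u0 * u0 + (7) * q * u0 * u0 * u1 * u1
def QQ (q w2 u0 u1 : ℤ) : ℤ := (-4) * u1 + (-4) * u0 + (5) * u0 * u1 * u1 + (5) * u0 * u0 * u1 + (4) * w2 * u1 + (4) * w2 * u0 + (-5) * w2 * u0 * u1 * u1 + (-5) * w2 * u0 * u0 * u1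
def RR (q w2 u0 u1 : ℤ) : ℤ := (12) + (-20) * u1 * u1 + (-5) * u0 * u1 + (-20) * u0 * u0 + (35) * u0 * u0 * u1 * u1 + (-4) * q * w2 + (4) * q * w2 * u1 * u1 + (3) * q * w2 * u0 * u1 + (4) * q * w2 * u0 * u0 + (-5) * q * w2 * u0 * u0 * u1 * u1
def P2 (q w1 w2 u0 : ℤ) : ℤ := (-24) + (45) * u0 * u0 + (4) * w2 + (-5) * w2 * u0 * u0 + (4) * w1 + (-5) * w1 * u0 * u0 + (-4) * w1 * w2 + (5) * w1 * w2 * u0 * u0 + (12) * q + (-21) * q * u0 * u0 + (3) * q * q * u0 * u0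
def Q2 (q w1 w2 u0 : ℤ) : ℤ := (-5) * u0 + (5) * w2 * u0 + (5) * w1 * u0 + (-3) * q * w1 * w2 * u0
def R2 (q w1 w2 u0 : ℤ) : ℤ := (20) + (-35) * u0 * u0 + (-4) * q * w2 + (5) * q * w2 * u0 * u0 + (-4) * q * w1 + (5) * q * w1 * u0 * u0 + (4) * q * w1 * w2 + (-5) * q * w1 * w2 * u0 * u0
def CFa (q w0 w1 w2 : ℤ) : ℤ := (-25) + (5) * w2 + (5) * w1 + (-5) * w1 * w2 + (5) * w0 + (-5) * w0 * w2 + (-5) * w0 * w1 + (42) * q + (-5) * q * w2 + (-5) * q * w1 + (5) * q * w1 * w2 + (-5) * q * w0 + (5) * q * w0 * w2 + (5) * q * w0 * w1 + (3) * q * w0 * w1 * w2 + (-12) * q * q + (-3) * q * q * w0 * w1 * w2 + (3) * q * q * q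
def CFb (q w1 w2 : ℤ) : ℤ := (-10) + (5) * w2 + (5) * w1 + (-5) * w1 * w2 + (27) * q + (-6) * q * w2 + (-6) * q * w1 + (6) * q * w1 * w2 + (-12) * q * q + (1) * q * q * w2 + (1) * q * q * w1 + (-1) * q * q * w1 * w2 + (3) * q * q * q

lemma Gpoly_ind {u0 u1 u2 u3 : ℤ}
    (h0 : u0 = -1 ∨ u0 = 0 ∨ u0 = 1) (h1 : u1 = -1 ∨ u1 = 0 ∨ u1 = 1)
    (h2 : u2 = -1 ∨ u2 = 0 ∨ u2 = 1) (h3 : u3 = -1 ∨ u3 = 0 ∨ u3 = 1) :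
    Gpoly u0 u1 u2 u3 = if u0 + u1 + u2 + u3 = 0 then 8 else 0 := by
  rcases h0 with rfl | rfl | rfl <;> rcases h1 with rfl | rfl | rfl <;>
    rcases h2 with rfl | rfl | rfl <;> rcases h3 with rfl | rfl | rfl <;> decide

lemma Gpoly_sym01 (a b c w : ℤ) : Gpoly a b c w = Gpoly b a c w := by
  simp only [Gpoly, g00, g01, g02, g10, g11, g12, g20, g21, g22]; ring

lemma Gpoly_sym02 (a b c w : ℤ) : Gpoly a b c w = Gpoly c b a w := by
  simp only [Gpoly, g00, g01, g02, g10, g11, g12, g20, g21, g22]; ring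



open Finset

variable {F : Type} [Field F] [Fintype F] [DecidableEq F]

local notation "χ" => quadraticChar F
local notation "qZ" => ((Fintype.card F : ℤ))

lemma chi_cases (x : F) : χ x = -1 ∨ χ x = 0 ∨ χ x = 1 := by
  rcases eq_or_ne x 0 with rfl | hx
  · exact Or.inr (Or.inl (quadraticChar_zero))
  · rcases quadraticChar_dichotomy hx with h | h
    · exact Or.inr (Or.inr h)
    · exact Or.inl h

lemma chi_sq (z : F) : (χ z) ^ 2 = 1 - (if z = 0 then (1 : ℤ) else 0) := by
  rcases eq_or_ne z 0 with rfl | hz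
  · simp
  · rw [quadraticChar_sq_one hz]; simp [hz]

lemma chi_inv {a : F} (ha : a ≠ 0) : χ a⁻¹ = χ a := by
  have h1 : χ a⁻¹ * χ a = 1 := by
    rw [← map_mul]
    simp [inv_mul_cancel₀ ha]
  rcases quadraticChar_dichotomy ha with h | h <;> rw [h] at h1 ⊢ <;> omega

section CharNeTwo

variable (hF2 : ringChar F ≠ 2)
include hF2

lemma S10 : ∑ z : F, χ z = 0 := quadraticChar_sum_zero hF2

lemma S20 : ∑ z : F, (χ z) ^ 2 = qZ - 1 := by
  simp only [chi_sq]
  rw [Finset.sum_sub_distrib, Finset.sum_const, Finset.sum_ite_eq' univ (0 : F) (fun _ => (1:ℤ))]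
  simp [Finset.card_univ]

lemma S30 : ∑ z : F, (χ z) ^ 3 = 0 := by
  have : ∀ z : F, (χ z) ^ 3 = χ z := by
    intro z
    rcases chi_cases z with h | h | h <;> rw [h] <;> norm_num
  rw [Finset.sum_congr rfl fun z _ => this z]
  exact S10 hF2

end CharNeTwo

/-- the affine reindexing equivalence `z ↦ c + a z` -/
def affEquiv (a : F) (ha : a ≠ 0) (c : F) : F ≃ F :=
  (Equiv.mulLeft₀ a ha).trans (Equiv.addLeft c)

lemma affEquiv_apply (a : F) (ha : a ≠ 0) (c z : F) : affEquiv a ha c z = c + a * z := rfl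

section Shifted

variable {a : F} (ha : a ≠ 0) (c : F) (hF2 : ringChar F ≠ 2)
include ha

lemma S01 (hF2 : ringChar F ≠ 2) : ∑ z : F, χ (c + a * z) = 0 := by
  have := Equiv.sum_comp (affEquiv a ha c) (fun t => χ t)
  simp only [affEquiv_apply] at this
  rw [this]
  exact S10 hF2

lemma S02 (hF2 : ringChar F ≠ 2) : ∑ z : F, (χ (c + a * z)) ^ 2 = qZ - 1 := by
  have := Equiv.sum_comp (affEquiv a ha c) (fun t => (χ t) ^ 2)
  simp only [affEquiv_apply] at this
  rw [this]
  exact S20 hF2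

end Shifted



/-- the equivalence `z ↦ 1 + c z⁻¹` (with junk value conventions). -/
def invEquiv (c : F) (hc : c ≠ 0) : F ≃ F where
  toFun z := 1 + c * z⁻¹
  invFun y := c * (y - 1)⁻¹
  left_inv := by
    intro z
    rcases eq_or_ne z 0 with rfl | hz
    · simp
    · field_simp
      rw [add_sub_cancel_left, div_self hc]
  right_inv := by
    intro y
    rcases eq_or_ne y 1 with rfl | hy
    · simp
    · have : y - 1 ≠ 0 := sub_ne_zero.mpr hy
      field_simp
      ring

lemma core (hF2 : ringChar F ≠ 2) {c : F} (hc : c ≠ 0) :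
    ∑ z : F, χ z * χ (z + c) = -1 := by
  have step1 : ∀ z : F, χ z * χ (z + c) = (χ z) ^ 2 * χ (1 + c * z⁻¹) := by
    intro z
    rcases eq_or_ne z 0 with rfl | hz
    · simp
    · have hzz : z + c = z * (1 + c * z⁻¹) := by field_simp
      rw [hzz, map_mul]
      ring
  rw [Finset.sum_congr rfl fun z _ => step1 z]
  have step2 : ∀ z : F, (χ z) ^ 2 * χ (1 + c * z⁻¹)
      = χ (1 + c * z⁻¹) - (if z = 0 then χ (1 + c * z⁻¹) else 0) := by
    intro z
    rw [chi_sq]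
    split_ifs with h <;> ring
  rw [Finset.sum_congr rfl fun z _ => step2 z, Finset.sum_sub_distrib,
    Finset.sum_ite_eq' univ (0 : F) (fun z => χ (1 + c * z⁻¹))]
  have step3 : ∑ z : F, χ (1 + c * z⁻¹) = 0 := by
    have := Equiv.sum_comp (invEquiv c hc) (fun t => χ t)
    rw [show ⇑(invEquiv c hc) = fun z => 1 + c * z⁻¹ from rfl] at this
    rw [this]
    exact quadraticChar_sum_zero hF2
  rw [step3]
  simp

section Main

variable {a : F} (ha : a ≠ 0) (c : F) (hF2 : ringChar F ≠ 2)
include ha hF2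

lemma S11 : ∑ z : F, χ z * χ (c + a * z)
    = qZ * χ a * (if c = 0 then 1 else 0) - χ a := by
  have key : ∀ z : F, χ (c + a * z) = χ a * χ (z + c * a⁻¹) := by
    intro z
    rw [← map_mul]
    congr 1
    field_simp
    ring
  have : ∀ z : F, χ z * χ (c + a * z) = χ a * (χ z * χ (z + c * a⁻¹)) := by
    intro z; rw [key z]; ring
  rw [Finset.sum_congr rfl fun z _ => this z, ← Finset.mul_sum]
  rcases eq_or_ne c 0 with rfl | hc
  · simp only [zero_mul, add_zero, if_pos rfl]
    have : ∀ z : F, χ z * χ z = (χ z) ^ 2 := fun z => (sq (χ z)).symm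
    rw [Finset.sum_congr rfl fun z _ => this z, S20 hF2]
    norm_num
    ring
  · have hca : c * a⁻¹ ≠ 0 := by
      simp [hc, ha]
    rw [core hF2 hca, if_neg hc]
    ring

omit ha in
lemma E1' : ∑ z : F, (if z = 0 then χ z else 0) = 0 := by
  rw [Finset.sum_ite_eq' univ (0 : F) (fun z => χ z)]
  simp

lemma S21 : ∑ z : F, (χ z) ^ 2 * χ (c + a * z) = -χ c := by
  have : ∀ z : F, (χ z) ^ 2 * χ (c + a * z)
      = χ (c + a * z) - (if z = 0 then χ (c + a * z) else 0) := by
    intro z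
    rw [chi_sq]
    split_ifs with h <;> ring
  rw [Finset.sum_congr rfl fun z _ => this z, Finset.sum_sub_distrib,
    Finset.sum_ite_eq' univ (0 : F) (fun z => χ (c + a * z)), S01 ha c hF2]
  simp

omit hF2 in
lemma D0 : ∑ z : F, (if c + a * z = 0 then (1:ℤ) else 0) = 1 := by
  have key : ∀ z : F, (c + a * z = 0) ↔ (z = -(c * a⁻¹)) := by
    intro z
    rw [add_eq_zero_iff_eq_neg]
    constructor
    · intro hz
      field_simp [hz]
      rw [hz]; ring
    · intro hz
      rw [hz]
      field_simp
  simp only [key]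
  rw [Finset.sum_ite_eq' univ (-(c * a⁻¹)) (fun _ => (1:ℤ))]
  simp

end Main


section Main2

variable {a : F} (ha : a ≠ 0) (c : F)

include ha

lemma cond_iff_root : ∀ z : F, (c + a * z = 0) ↔ (z = -(c * a⁻¹)) := by
  intro z
  rw [add_eq_zero_iff_eq_neg]
  constructor
  · intro hz
    field_simp [hz]
    rw [hz]; ring
  · intro hz
    rw [hz]
    field_simp

lemma chi_root (hm1 : quadraticChar F (-1 : F) = -1) :
    χ (-(c * a⁻¹)) = -(χ a * χ c) := by
  rcases eq_or_ne c 0 with rfl | hc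
  · simp
  · have h1 : -(c * a⁻¹) = (-1) * c * a⁻¹ := by ring
    rw [h1, map_mul, map_mul, hm1, chi_inv ha]
    ring

lemma D1 (hm1 : quadraticChar F (-1 : F) = -1) :
    ∑ z : F, χ z * (if c + a * z = 0 then (1:ℤ) else 0) = -(χ a * χ c) := by
  have : ∀ z : F, χ z * (if c + a * z = 0 then (1:ℤ) else 0)
      = (if z = -(c * a⁻¹) then χ z else 0) := by
    intro z
    rw [mul_ite, mul_one, mul_zero, if_congr (cond_iff_root ha c z) rfl rfl]
  rw [Finset.sum_congr rfl fun z _ => this z,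
    Finset.sum_ite_eq' univ (-(c * a⁻¹)) (fun z => χ z)]
  rw [if_pos (mem_univ _), chi_root ha c hm1]

lemma D2 : ∑ z : F, (χ z) ^ 2 * (if c + a * z = 0 then (1:ℤ) else 0)
    = 1 - (if c = 0 then 1 else 0) := by
  have : ∀ z : F, (χ z) ^ 2 * (if c + a * z = 0 then (1:ℤ) else 0)
      = (if z = -(c * a⁻¹) then (χ z) ^ 2 else 0) := by
    intro z
    rw [mul_ite, mul_one, mul_zero, if_congr (cond_iff_root ha c z) rfl rfl]
  rw [Finset.sum_congr rfl fun z _ => this z,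
    Finset.sum_ite_eq' univ (-(c * a⁻¹)) (fun z => (χ z) ^ 2)]
  rcases eq_or_ne c 0 with rfl | hc
  · simp
  · have hne : -(c * a⁻¹) ≠ 0 := by
      simp [hc, ha]
    rw [if_pos (mem_univ _), if_neg hc, quadraticChar_sq_one hne]
    ring

lemma S12 (hm1 : quadraticChar F (-1 : F) = -1) (hF2 : ringChar F ≠ 2) :
    ∑ z : F, χ z * (χ (c + a * z)) ^ 2 = χ a * χ c := by
  have : ∀ z : F, χ z * (χ (c + a * z)) ^ 2
      = χ z - χ z * (if c + a * z = 0 then (1:ℤ) else 0) := by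
    intro z
    rw [chi_sq]
    ring
  rw [Finset.sum_congr rfl fun z _ => this z, Finset.sum_sub_distrib,
    D1 ha c hm1, quadraticChar_sum_zero hF2]
  ring

lemma S22 (hF2 : ringChar F ≠ 2) :
    ∑ z : F, (χ z) ^ 2 * (χ (c + a * z)) ^ 2 = qZ - 2 + (if c = 0 then 1 else 0) := by
  have : ∀ z : F, (χ z) ^ 2 * (χ (c + a * z)) ^ 2
      = (χ (c + a * z)) ^ 2 - (if z = 0 then (χ (c + a * z)) ^ 2 else 0) := by
    intro z
    rw [chi_sq z]
    split_ifs with h <;> ring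
  rw [Finset.sum_congr rfl fun z _ => this z, Finset.sum_sub_distrib,
    Finset.sum_ite_eq' univ (0 : F) (fun z => (χ (c + a * z)) ^ 2), S02 ha c hF2]
  rw [if_pos (mem_univ _), mul_zero, add_zero, chi_sq c]
  ring

end Main2

lemma E0 : ∑ x : F, (if x = 0 then (1:ℤ) else 0) = 1 := by
  rw [Finset.sum_ite_eq' univ (0 : F) (fun _ => (1:ℤ))]
  simp

lemma E1 : ∑ x : F, χ x * (if x = 0 then (1:ℤ) else 0) = 0 := by
  have : ∀ x : F, χ x * (if x = 0 then (1:ℤ) else 0) = (if x = 0 then χ x else 0) := by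
    intro x
    rw [mul_ite, mul_one, mul_zero]
  rw [Finset.sum_congr rfl fun x _ => this x, Finset.sum_ite_eq' univ (0 : F) (fun x => χ x)]
  simp

lemma E2 : ∑ x : F, (χ x) ^ 2 * (if x = 0 then (1:ℤ) else 0) = 0 := by
  have : ∀ x : F, (χ x) ^ 2 * (if x = 0 then (1:ℤ) else 0)
      = (if x = 0 then (χ x) ^ 2 else 0) := by
    intro x
    rw [mul_ite, mul_one, mul_zero]
  rw [Finset.sum_congr rfl fun x _ => this x,
    Finset.sum_ite_eq' univ (0 : F) (fun x => (χ x) ^ 2)]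
  simp


section Steps

variable (hF2 : ringChar F ≠ 2) (hm1 : quadraticChar F (-1 : F) = -1)
include hF2 hm1

lemma step1 {e2 : F} (h2 : e2 ≠ 0) (u0 u1 : ℤ) (c : F) :
    ∑ z : F, Gpoly u0 u1 (χ z) (χ (c + e2 * z))
      = PP qZ (χ e2) u0 u1 + QQ qZ (χ e2) u0 u1 * χ c
        + RR qZ (χ e2) u0 u1 * (if c = 0 then 1 else 0) := by
  have key : ∀ z : F, Gpoly u0 u1 (χ z) (χ (c + e2 * z))
      = g00 u0 u1 + g01 u0 u1 * χ (c + e2 * z) + g02 u0 u1 * (χ (c + e2 * z)) ^ 2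
        + g10 u0 u1 * χ z + g11 u0 u1 * (χ z * χ (c + e2 * z))
        + g12 u0 u1 * (χ z * (χ (c + e2 * z)) ^ 2)
        + g20 u0 u1 * (χ z) ^ 2 + g21 u0 u1 * ((χ z) ^ 2 * χ (c + e2 * z))
        + g22 u0 u1 * ((χ z) ^ 2 * (χ (c + e2 * z)) ^ 2) := by
    intro z
    rfl
  rw [Finset.sum_congr rfl fun z _ => key z]
  simp only [Finset.sum_add_distrib, ← Finset.mul_sum, Finset.sum_const, Finset.card_univ,
    nsmul_eq_mul]
  rw [ S01 h2 c hF2, S02 h2 c hF2, S10 hF2, S20 hF2,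
    S11 h2 c hF2, S12 h2 c hm1 hF2, S21 h2 c hF2, S22 h2 c hF2]
  simp only [PP, QQ, RR, g00, g01, g02, g10, g11, g12, g20, g21, g22, nsmul_eq_mul]
  ring

lemma step2 {e1 : F} (h1 : e1 ≠ 0) (w2 : ℤ) (u0 : ℤ) (c0 : F) :
    ∑ y : F, (PP qZ w2 u0 (χ y) + QQ qZ w2 u0 (χ y) * χ (c0 + e1 * y)
        + RR qZ w2 u0 (χ y) * (if c0 + e1 * y = 0 then 1 else 0))
      = P2 qZ (χ e1) w2 u0 + Q2 qZ (χ e1) w2 u0 * χ c0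
        + R2 qZ (χ e1) w2 u0 * (if c0 = 0 then 1 else 0) := by
  have key : ∀ y : F, (PP qZ w2 u0 (χ y) + QQ qZ w2 u0 (χ y) * χ (c0 + e1 * y)
        + RR qZ w2 u0 (χ y) * (if c0 + e1 * y = 0 then 1 else 0))
      = ((-8) + (16) * u0 * u0 + (4) * w2 + (-4) * w2 * u0 * u0 + (4) * qZ + (-4) * qZ * u0 * u0)
        + ((2) * u0 + (-3) * w2 * u0 + (-1) * qZ * u0) * χ y
        + ((16) + (-30) * u0 * u0 + (-4) * w2 + (5) * w2 * u0 * u0 + (-4) * qZ + (7) * qZ * u0 * u0) * (χ y) ^ 2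
        + ((-4) * u0 + (4) * w2 * u0) * χ (c0 + e1 * y)
        + ((-4) + (5) * u0 * u0 + (4) * w2 + (-5) * w2 * u0 * u0) * (χ y * χ (c0 + e1 * y))
        + ((5) * u0 + (-5) * w2 * u0) * ((χ y) ^ 2 * χ (c0 + e1 * y))
        + ((12) + (-20) * u0 * u0 + (-4) * qZ * w2 + (4) * qZ * w2 * u0 * u0) * (if c0 + e1 * y = 0 then 1 else 0)
        + ((-5) * u0 + (3) * qZ * w2 * u0) * (χ y * (if c0 + e1 * y = 0 then 1 else 0))
        + ((-20) + (35) * u0 * u0 + (4) * qZ * w2 + (-5) * qZ * w2 * u0 * u0) * ((χ y) ^ 2 * (if c0 + e1 * y = 0 then 1 else 0)) := by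
    intro y
    simp only [PP, QQ, RR]
    ring
  rw [Finset.sum_congr rfl fun y _ => key y]
  simp only [Finset.sum_add_distrib, ← Finset.mul_sum, Finset.sum_const, Finset.card_univ,
    nsmul_eq_mul]
  rw [ S01 h1 c0 hF2, S10 hF2, S20 hF2,
    S11 h1 c0 hF2, S21 h1 c0 hF2, D0 h1 c0, D1 h1 c0 hm1, D2 h1 c0]
  simp only [P2, Q2, R2, nsmul_eq_mul]
  ring

lemma step3a {e0 : F} (h0 : e0 ≠ 0) (w1 w2 : ℤ) :
    ∑ x : F, (P2 qZ w1 w2 (χ x) + Q2 qZ w1 w2 (χ x) * χ (e0 * x)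
        + R2 qZ w1 w2 (χ x) * (if e0 * x = 0 then 1 else 0))
      = CFa qZ (χ e0) w1 w2 := by
  have key : ∀ x : F, (P2 qZ w1 w2 (χ x) + Q2 qZ w1 w2 (χ x) * χ (e0 * x)
        + R2 qZ w1 w2 (χ x) * (if e0 * x = 0 then 1 else 0))
      = ((-24) + (4) * w2 + (4) * w1 + (-4) * w1 * w2 + (12) * qZ)
        + ((45) + (-5) * w2 + (-5) * w1 + (5) * w1 * w2 + (-5) * (χ e0) + (5) * (χ e0) * w2
            + (5) * (χ e0) * w1 + (-21) * qZ + (-3) * qZ * (χ e0) * w1 * w2 + (3) * qZ * qZ) * (χ x) ^ 2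
        + ((20) + (-4) * qZ * w2 + (-4) * qZ * w1 + (4) * qZ * w1 * w2) * (if x = 0 then 1 else 0)
        + ((-35) + (5) * qZ * w2 + (5) * qZ * w1 + (-5) * qZ * w1 * w2) * ((χ x) ^ 2 * (if x = 0 then 1 else 0)) := by
    intro x
    have hmul : χ (e0 * x) = χ e0 * χ x := map_mul _ _ _
    have hif : (if e0 * x = 0 then (1:ℤ) else 0) = (if x = 0 then 1 else 0) := by
      apply if_congr _ rfl rfl
      simp [h0]
    rw [hmul, hif]
    simp only [P2, Q2, R2]
    ring
  rw [Finset.sum_congr rfl fun x _ => key x]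
  simp only [Finset.sum_add_distrib, ← Finset.mul_sum, Finset.sum_const, Finset.card_univ,
    nsmul_eq_mul]
  rw [ S20 hF2, E0, E2]
  simp only [CFa, nsmul_eq_mul]
  ring

omit hm1 in
lemma step3b (w1 w2 : ℤ) :
    ∑ x : F, (P2 qZ w1 w2 (χ x) + R2 qZ w1 w2 (χ x))
      = CFb qZ w1 w2 := by
  have key : ∀ x : F, (P2 qZ w1 w2 (χ x) + R2 qZ w1 w2 (χ x))
      = ((-4) + (4) * w2 + (4) * w1 + (-4) * w1 * w2 + (12) * qZ + (-4) * qZ * w2 + (-4) * qZ * w1 + (4) * qZ * w1 * w2)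
        + ((10) + (-5) * w2 + (-5) * w1 + (5) * w1 * w2 + (-21) * qZ + (5) * qZ * w2 + (5) * qZ * w1
            + (-5) * qZ * w1 * w2 + (3) * qZ * qZ) * (χ x) ^ 2 := by
    intro x
    simp only [P2, R2]
    ring
  rw [Finset.sum_congr rfl fun x _ => key x]
  simp only [Finset.sum_add_distrib, ← Finset.mul_sum, Finset.sum_const, Finset.card_univ,
    nsmul_eq_mul]
  rw [ S20 hF2]
  simp only [CFb, nsmul_eq_mul]
  ring

end Steps

/-- the triple character sum -/
def TS (e0 e1 e2 : F) : ℤ :=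
  ∑ x : F, ∑ y : F, ∑ z : F, Gpoly (χ x) (χ y) (χ z) (χ (e0 * x + e1 * y + e2 * z))

section MasterLemmas

variable (hF2 : ringChar F ≠ 2) (hm1 : quadraticChar F (-1 : F) = -1)
include hF2 hm1

lemma master_ne {e0 e1 e2 : F} (h0 : e0 ≠ 0) (h1 : e1 ≠ 0) (h2 : e2 ≠ 0) :
    TS e0 e1 e2 = CFa qZ (χ e0) (χ e1) (χ e2) := by
  unfold TS
  rw [Finset.sum_congr rfl fun x _ => Finset.sum_congr rfl fun y _ =>
    step1 hF2 hm1 h2 (χ x) (χ y) (e0 * x + e1 * y)]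
  rw [Finset.sum_congr rfl fun x _ => step2 hF2 hm1 h1 (χ e2) (χ x) (e0 * x)]
  exact step3a hF2 hm1 h0 (χ e1) (χ e2)

lemma master_zero {e0 e1 e2 : F} (h0 : e0 = 0) (h1 : e1 ≠ 0) (h2 : e2 ≠ 0) :
    TS e0 e1 e2 = CFb qZ (χ e1) (χ e2) := by
  unfold TS
  rw [Finset.sum_congr rfl fun x _ => Finset.sum_congr rfl fun y _ =>
    step1 hF2 hm1 h2 (χ x) (χ y) (e0 * x + e1 * y)]
  rw [Finset.sum_congr rfl fun x _ => step2 hF2 hm1 h1 (χ e2) (χ x) (e0 * x)]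
  subst h0
  have key : ∀ x : F, (P2 qZ (χ e1) (χ e2) (χ x) + Q2 qZ (χ e1) (χ e2) (χ x) * χ ((0:F) * x)
      + R2 qZ (χ e1) (χ e2) (χ x) * (if (0:F) * x = 0 then 1 else 0))
      = P2 qZ (χ e1) (χ e2) (χ x) + R2 qZ (χ e1) (χ e2) (χ x) := by
    intro x
    rw [zero_mul, quadraticChar_zero, if_pos rfl]
    ring
  rw [Finset.sum_congr rfl fun x _ => key x]
  exact step3b hF2 (χ e1) (χ e2)

end MasterLemmas

lemma TS_swap01 (e0 e1 e2 : F) : TS e0 e1 e2 = TS e1 e0 e2 := by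
  unfold TS
  rw [Finset.sum_comm]
  refine Finset.sum_congr rfl fun a _ => Finset.sum_congr rfl fun b _ =>
    Finset.sum_congr rfl fun z _ => ?_
  rw [Gpoly_sym01, show e0 * b + e1 * a + e2 * z = e1 * a + e0 * b + e2 * z from by ring]

lemma TS_swap02 (e0 e1 e2 : F) : TS e0 e1 e2 = TS e2 e1 e0 := by
  unfold TS
  rw [Finset.sum_congr rfl fun x _ => Finset.sum_comm, Finset.sum_comm,
    Finset.sum_congr rfl fun z _ => Finset.sum_comm]
  refine Finset.sum_congr rfl fun a _ => Finset.sum_congr rfl fun b _ =>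
    Finset.sum_congr rfl fun c _ => ?_
  rw [Gpoly_sym02, show e0 * c + e1 * b + e2 * a = e2 * a + e1 * b + e0 * c from by ring]

section Bridge

variable (p hh : ℕ) (d : ℕ)

lemma charp_eq (hp : p.Prime) (hh0 : 0 < hh) (hcard : Fintype.card F = p ^ hh) :
    ringChar F = p := by
  obtain ⟨n, hpr, hc⟩ := FiniteField.card F (ringChar F)
  rw [hcard] at hc
  have hdvd : p ∣ ringChar F ^ (n : ℕ) := by
    rw [← hc]
    exact dvd_pow_self p hh0.ne'
  have := hp.dvd_of_dvd_pow hdvd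
  exact ((Nat.prime_dvd_prime_iff_eq hp hpr).mp this).symm

lemma hp5 (hp : p.Prime) (hp3 : 3 < p) : 5 ≤ p := by
  have h4 : p ≠ 4 := by
    rintro rfl
    norm_num at hp
  omega

lemma small_int_cast (hp : p.Prime) (hp3 : 3 < p) (hh0 : 0 < hh)
    (hcard : Fintype.card F = p ^ hh) (n : ℤ) (hn : |n| ≤ 4) :
    ((n : F) = 0 ↔ n = 0) := by
  have hP : CharP F p := by
    rw [← charp_eq p hh hp hh0 hcard]
    exact ringChar.charP F
  constructor
  · intro h0
    have hdvd : (p : ℤ) ∣ n := (CharP.intCast_eq_zero_iff F p n).mp h0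
    by_contra hne
    have h1 : (p : ℤ) ∣ |n| := (dvd_abs _ _).mpr hdvd
    have h2 : (p : ℤ) ≤ |n| := Int.le_of_dvd (abs_pos.mpr hne) h1
    have h5 : (5 : ℤ) ≤ (p : ℤ) := by exact_mod_cast hp5 p hp hp3
    omega
  · rintro rfl
    simp

lemma hF2' (hp : p.Prime) (hp3 : 3 < p) (hh0 : 0 < hh) (hcard : Fintype.card F = p ^ hh) :
    ringChar F ≠ 2 := by
  rw [charp_eq p hh hp hh0 hcard]
  omega

lemma hm1' (hp : p.Prime) (hp3 : 3 < p) (hh0 : 0 < hh) (hcard : Fintype.card F = p ^ hh)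
    (hd : p ^ hh = 2 * d + 1) (hodd : Odd d) :
    quadraticChar F (-1 : F) = -1 := by
  apply quadraticChar_neg_one_iff_not_isSquare.mpr
  rw [FiniteField.isSquare_neg_one_iff]
  obtain ⟨k, hk⟩ := hodd
  have : Fintype.card F = 4 * k + 3 := by omega
  omega

lemma chi_pow (hp : p.Prime) (hp3 : 3 < p) (hh0 : 0 < hh) (hcard : Fintype.card F = p ^ hh)
    (hd : p ^ hh = 2 * d + 1) (x : F) :
    ((χ x : ℤ) : F) = x ^ d := by
  have hF2 : ringChar F ≠ 2 := hF2' p hh hp hp3 hh0 hcard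
  have hd0 : d ≠ 0 := by
    have h5 : 5 ≤ p := hp5 p hp hp3
    have : 5 ≤ p ^ hh := le_trans h5 (Nat.le_self_pow hh0.ne' p)
    omega
  have hdq : Fintype.card F / 2 = d := by omega
  rcases eq_or_ne x 0 with rfl | hx
  · rw [quadraticChar_zero, zero_pow hd0]
    simp
  · rw [quadraticChar_apply, quadraticCharFun_eq_pow_of_char_ne_two hF2 hx, hdq]
    rcases FiniteField.pow_dichotomy hF2 hx with hpow | hpow
    · rw [hdq] at hpow
      rw [if_pos hpow, hpow]
      simp
    · rw [hdq] at hpow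
      have hne : x ^ d ≠ 1 := by
        rw [hpow]
        exact Ring.neg_one_ne_one_of_char_ne_two hF2
      rw [if_neg hne, hpow]
      simp

lemma cond_iff' (hp : p.Prime) (hp3 : 3 < p) (hh0 : 0 < hh) (hcard : Fintype.card F = p ^ hh)
    (hd : p ^ hh = 2 * d + 1) (e0 e1 e2 : F) (x y z : F) :
    (x ^ d + y ^ d + z ^ d + (e0 * x + e1 * y + e2 * z) ^ d = 0)
      ↔ (χ x + χ y + χ z + χ (e0 * x + e1 * y + e2 * z) = 0) := by
  have hcast : ∀ t : F, ((χ t : ℤ) : F) = t ^ d := chi_pow p hh d hp hp3 hh0 hcard hd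
  have habs : ∀ t : F, |χ t| ≤ 1 := by
    intro t
    rcases chi_cases t with h | h | h <;> rw [h] <;> norm_num
  have hb : |χ x + χ y + χ z + χ (e0 * x + e1 * y + e2 * z)| ≤ 4 := by
    rcases chi_cases x with h1 | h1 | h1 <;> rcases chi_cases y with h2 | h2 | h2 <;>
      rcases chi_cases z with h3 | h3 | h3 <;>
      rcases chi_cases (e0 * x + e1 * y + e2 * z) with h4 | h4 | h4 <;>
      rw [h1, h2, h3, h4] <;> norm_num
  rw [← hcast x, ← hcast y, ← hcast z, ← hcast (e0 * x + e1 * y + e2 * z)]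
  rw [show (((χ x : ℤ) : F) + ((χ y : ℤ) : F) + ((χ z : ℤ) : F)
      + ((χ (e0 * x + e1 * y + e2 * z) : ℤ) : F))
      = (((χ x + χ y + χ z + χ (e0 * x + e1 * y + e2 * z) : ℤ)) : F) from by push_cast; ring]
  exact small_int_cast p hh hp hp3 hh0 hcard _ hb

lemma chi_of_pow_one (hp : p.Prime) (hp3 : 3 < p) (hh0 : 0 < hh)
    (hcard : Fintype.card F = p ^ hh) (hd : p ^ hh = 2 * d + 1) {e : F} (he : e ^ d = 1) :
    χ e = 1 := by
  have hcast := chi_pow p hh d hp hp3 hh0 hcard hd e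
  rw [he] at hcast
  have hF2 : ringChar F ≠ 2 := hF2' p hh hp hp3 hh0 hcard
  rcases chi_cases e with h | h | h
  · rw [h, Int.cast_neg, Int.cast_one] at hcast
    exact absurd hcast (Ring.neg_one_ne_one_of_char_ne_two hF2)
  · rw [h, Int.cast_zero] at hcast
    exact absurd hcast.symm one_ne_zero
  · exact h

lemma chi_of_pow_negone (hp : p.Prime) (hp3 : 3 < p) (hh0 : 0 < hh)
    (hcard : Fintype.card F = p ^ hh) (hd : p ^ hh = 2 * d + 1) {e : F} (he : e ^ d = -1) :
    χ e = -1 := by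
  have hcast := chi_pow p hh d hp hp3 hh0 hcard hd e
  rw [he] at hcast
  have hF2 : ringChar F ≠ 2 := hF2' p hh hp hp3 hh0 hcard
  rcases chi_cases e with h | h | h
  · exact h
  · rw [h, Int.cast_zero] at hcast
    exact absurd (neg_eq_zero.mp hcast.symm) one_ne_zero
  · rw [h, Int.cast_one] at hcast
    exact absurd hcast.symm (Ring.neg_one_ne_one_of_char_ne_two hF2)

lemma ne_zero_of_pow_one (hd0 : d ≠ 0) {e : F} (he : e ^ d = 1) : e ≠ 0 := by
  rintro rfl
  rw [zero_pow hd0] at he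
  exact one_ne_zero he.symm

lemma ne_zero_of_pow_negone (hp : p.Prime) (hp3 : 3 < p) (hh0 : 0 < hh)
    (hcard : Fintype.card F = p ^ hh) (hd0 : d ≠ 0) {e : F} (he : e ^ d = -1) : e ≠ 0 := by
  rintro rfl
  rw [zero_pow hd0] at he
  have hF2 : ringChar F ≠ 2 := hF2' p hh hp hp3 hh0 hcard
  exact absurd (neg_eq_zero.mp he.symm) one_ne_zero

end Bridge

section Counting

variable (d : ℕ) (e0 e1 e2 : F)

lemma eval_fermat (v : Fin 3 → F) :
    MvPolynomial.eval v (fermatSlice F d e0 e1 e2)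
      = (v 0) ^ d + (v 1) ^ d + (v 2) ^ d + (e0 * v 0 + e1 * v 1 + e2 * v 2) ^ d := by
  simp [fermatSlice]

lemma eval_fermat_smul (c : F) (v : Fin 3 → F) :
    MvPolynomial.eval (c • v) (fermatSlice F d e0 e1 e2)
      = c ^ d * MvPolynomial.eval v (fermatSlice F d e0 e1 e2) := by
  rw [eval_fermat, eval_fermat]
  simp only [Pi.smul_apply, smul_eq_mul]
  rw [show e0 * (c * v 0) + e1 * (c * v 1) + e2 * (c * v 2)
      = c * (e0 * v 0 + e1 * v 1 + e2 * v 2) from by ring]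
  rw [mul_pow, mul_pow, mul_pow, mul_pow]
  ring

/-- the equivalence between triples and vectors -/
def tripleEquiv : F × F × F ≃ (Fin 3 → F) where
  toFun t := ![t.1, t.2.1, t.2.2]
  invFun v := (v 0, v 1, v 2)
  left_inv := by rintro ⟨x, y, z⟩; simp
  right_inv := by
    intro v
    funext i
    fin_cases i <;> simp

lemma proj_card :
    Nat.card {v : Fin 3 → F // v ≠ 0 ∧ MvPolynomial.eval v (fermatSlice F d e0 e1 e2) = 0}
      = Nat.card {x : Projectivization F (Fin 3 → F) //
          MvPolynomial.eval x.rep (fermatSlice F d e0 e1 e2) = 0} * (Fintype.card F - 1) := by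
  have key : ∀ (pc : {x : Projectivization F (Fin 3 → F) //
      MvPolynomial.eval x.rep (fermatSlice F d e0 e1 e2) = 0} × Fˣ),
      ((pc.2 : F) • pc.1.1.rep ≠ 0
        ∧ MvPolynomial.eval ((pc.2 : F) • pc.1.1.rep) (fermatSlice F d e0 e1 e2) = 0) := by
    rintro ⟨⟨x, hx⟩, c⟩
    refine ⟨smul_ne_zero (Units.ne_zero c) (Projectivization.rep_nonzero x), ?_⟩
    rw [eval_fermat_smul, hx, mul_zero]
  let f : {x : Projectivization F (Fin 3 → F) //
      MvPolynomial.eval x.rep (fermatSlice F d e0 e1 e2) = 0} × Fˣ →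
      {v : Fin 3 → F // v ≠ 0 ∧ MvPolynomial.eval v (fermatSlice F d e0 e1 e2) = 0} :=
    fun pc => ⟨(pc.2 : F) • pc.1.1.rep, key pc⟩
  have hbij : Function.Bijective f := by
    constructor
    · rintro ⟨⟨x, hx⟩, c⟩ ⟨⟨x', hx'⟩, c'⟩ hf
      have h1 : (c : F) • x.rep = (c' : F) • x'.rep := congrArg Subtype.val hf
      have hxx : x = x' := by
        have hsm : ((c⁻¹ * c' : Fˣ) : F) • x'.rep = x.rep := by
          rw [Units.val_mul, mul_smul, ← h1, ← mul_smul]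
          norm_num
        have h2 : Projectivization.mk F x.rep (Projectivization.rep_nonzero x)
            = Projectivization.mk F x'.rep (Projectivization.rep_nonzero x') := by
          rw [Projectivization.mk_eq_mk_iff]
          exact ⟨c⁻¹ * c', by rw [Units.smul_def]; exact hsm⟩
        rwa [Projectivization.mk_rep, Projectivization.mk_rep] at h2
      subst hxx
      have hcc : (c : F) = (c' : F) :=
        smul_left_injective F (Projectivization.rep_nonzero x) h1
      have : c = c' := Units.ext hcc
      subst this
      rfl
    · rintro ⟨v, hv0, hQ⟩
      obtain ⟨a, ha⟩ := Projectivization.exists_smul_eq_mk_rep F v hv0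
      have hPx : MvPolynomial.eval (Projectivization.mk F v hv0).rep
          (fermatSlice F d e0 e1 e2) = 0 := by
        rw [← ha, Units.smul_def, eval_fermat_smul, hQ, mul_zero]
      refine ⟨⟨⟨Projectivization.mk F v hv0, hPx⟩, a⁻¹⟩, ?_⟩
      apply Subtype.ext
      show ((a⁻¹ : Fˣ) : F) • (Projectivization.mk F v hv0).rep = v
      rw [← ha, Units.smul_def, smul_smul]
      norm_num
  rw [← Nat.card_congr (Equiv.ofBijective f hbij), Nat.card_prod,
    Nat.card_eq_fintype_card (α := Fˣ), Fintype.card_units]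

lemma card_split (hd0 : d ≠ 0) :
    Nat.card {v : Fin 3 → F // MvPolynomial.eval v (fermatSlice F d e0 e1 e2) = 0}
      = Nat.card {v : Fin 3 → F // v ≠ 0
          ∧ MvPolynomial.eval v (fermatSlice F d e0 e1 e2) = 0} + 1 := by
  classical
  rw [Nat.card_eq_fintype_card, Nat.card_eq_fintype_card,
    Fintype.card_subtype, Fintype.card_subtype]
  have h0 : (0 : Fin 3 → F) ∈ Finset.univ.filter
      (fun v : Fin 3 → F => MvPolynomial.eval v (fermatSlice F d e0 e1 e2) = 0) := by
    simp [eval_fermat, zero_pow hd0]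
  have hsub : Finset.univ.filter (fun v : Fin 3 → F => v ≠ 0
        ∧ MvPolynomial.eval v (fermatSlice F d e0 e1 e2) = 0)
      = (Finset.univ.filter
        (fun v : Fin 3 → F => MvPolynomial.eval v (fermatSlice F d e0 e1 e2) = 0)).erase 0 := by
    ext v
    simp [Finset.mem_erase, and_comm]
  rw [hsub, Finset.card_erase_of_mem h0]
  have hpos := Finset.card_pos.mpr ⟨(0 : Fin 3 → F), h0⟩
  omega

end Counting

section SumEq

variable (p hh d : ℕ) (e0 e1 e2 : F)

lemma Gpoly_cond (hp : p.Prime) (hp3 : 3 < p) (hh0 : 0 < hh)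
    (hcard : Fintype.card F = p ^ hh) (hd : p ^ hh = 2 * d + 1) (x y z : F) :
    Gpoly (χ x) (χ y) (χ z) (χ (e0 * x + e1 * y + e2 * z))
      = if x ^ d + y ^ d + z ^ d + (e0 * x + e1 * y + e2 * z) ^ d = 0 then 8 else 0 := by
  rw [Gpoly_ind (chi_cases x) (chi_cases y) (chi_cases z)
    (chi_cases (e0 * x + e1 * y + e2 * z))]
  exact if_congr (cond_iff' p hh d hp hp3 hh0 hcard hd e0 e1 e2 x y z).symm rfl rfl

lemma sum_eq (hp : p.Prime) (hp3 : 3 < p) (hh0 : 0 < hh)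
    (hcard : Fintype.card F = p ^ hh) (hd : p ^ hh = 2 * d + 1) :
    (8 : ℤ) * (Nat.card {v : Fin 3 → F //
        MvPolynomial.eval v (fermatSlice F d e0 e1 e2) = 0}) = TS e0 e1 e2 := by
  classical
  have h1 : Nat.card {v : Fin 3 → F // MvPolynomial.eval v (fermatSlice F d e0 e1 e2) = 0}
      = Nat.card {t : F × F × F //
          t.1 ^ d + t.2.1 ^ d + t.2.2 ^ d + (e0 * t.1 + e1 * t.2.1 + e2 * t.2.2) ^ d = 0} := by
    apply Nat.card_congr
    apply Equiv.subtypeEquiv (tripleEquiv (F := F)).symm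
    intro v
    rw [eval_fermat]
    exact Iff.rfl
  rw [h1, Nat.card_eq_fintype_card, Fintype.card_subtype]
  rw [show ((Finset.univ.filter fun t : F × F × F =>
      t.1 ^ d + t.2.1 ^ d + t.2.2 ^ d + (e0 * t.1 + e1 * t.2.1 + e2 * t.2.2) ^ d = 0).card : ℤ)
      = ∑ t : F × F × F, (if t.1 ^ d + t.2.1 ^ d + t.2.2 ^ d
          + (e0 * t.1 + e1 * t.2.1 + e2 * t.2.2) ^ d = 0 then (1:ℤ) else 0)
      from Finset.natCast_card_filter _ _]
  rw [Finset.mul_sum]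
  have hpt : ∀ t : F × F × F, (8:ℤ) * (if t.1 ^ d + t.2.1 ^ d + t.2.2 ^ d
      + (e0 * t.1 + e1 * t.2.1 + e2 * t.2.2) ^ d = 0 then (1:ℤ) else 0)
      = Gpoly (χ t.1) (χ t.2.1) (χ t.2.2) (χ (e0 * t.1 + e1 * t.2.1 + e2 * t.2.2)) := by
    intro t
    rw [Gpoly_cond p hh d e0 e1 e2 hp hp3 hh0 hcard hd, mul_ite, mul_one, mul_zero]
  rw [Finset.sum_congr rfl fun t _ => hpt t]
  rw [Fintype.sum_prod_type]
  unfold TS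
  apply Finset.sum_congr rfl
  intro x _
  rw [Fintype.sum_prod_type]

end SumEq

lemma final_aux (p hh d : ℕ) (e0 e1 e2 : F) (hp : p.Prime) (hp3 : 3 < p) (hh0 : 0 < hh)
    (hcard : Fintype.card F = p ^ hh) (hd : p ^ hh = 2 * d + 1) (hodd : Odd d)
    (hcase :
      (e0 ^ d = 1 ∧ e1 ^ d = 1 ∧ e2 ^ d = 1) ∨
      (e0 ^ d = -1 ∧ e1 ^ d = -1 ∧ e2 ^ d = 1) ∨
      (e0 ^ d = -1 ∧ e1 ^ d = 1 ∧ e2 ^ d = -1) ∨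
      (e0 ^ d = 1 ∧ e1 ^ d = -1 ∧ e2 ^ d = -1) ∨
      (e0 ^ d = -1 ∧ e1 ^ d = -1 ∧ e2 = 0) ∨
      (e0 ^ d = -1 ∧ e1 = 0 ∧ e2 ^ d = -1) ∨
      (e0 = 0 ∧ e1 ^ d = -1 ∧ e2 ^ d = -1)) :
    (8 * Nat.card {x : Projectivization F (Fin 3 → F) //
        MvPolynomial.eval x.rep (fermatSlice F d e0 e1 e2) = 0} : ℤ)
      = 3 * qZ ^ 2 - 12 * qZ + 33 := by
  have hF2 : ringChar F ≠ 2 := hF2' p hh hp hp3 hh0 hcard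
  have hm1 : quadraticChar F (-1 : F) = -1 := hm1' p hh d hp hp3 hh0 hcard hd hodd
  have hq5 : 5 ≤ Fintype.card F := by
    rw [hcard]
    exact le_trans (hp5 p hp hp3) (Nat.le_self_pow hh0.ne' p)
  have hd0 : d ≠ 0 := by
    have := hq5
    rw [hcard] at this
    omega
  have hone : ∀ {e : F}, e ^ d = 1 → χ e = 1 :=
    fun he => chi_of_pow_one p hh d hp hp3 hh0 hcard hd he
  have hneg : ∀ {e : F}, e ^ d = -1 → χ e = -1 :=
    fun he => chi_of_pow_negone p hh d hp hp3 hh0 hcard hd he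
  have honeZ : ∀ {e : F}, e ^ d = 1 → e ≠ 0 :=
    fun he => ne_zero_of_pow_one d hd0 he
  have hnegZ : ∀ {e : F}, e ^ d = -1 → e ≠ 0 :=
    fun he => ne_zero_of_pow_negone p hh d hp hp3 hh0 hcard hd0 he
  have hTSval : TS e0 e1 e2 = (qZ - 1) * (3 * qZ ^ 2 - 12 * qZ + 33) + 8 := by
    rcases hcase with ⟨h1, h2, h3⟩ | ⟨h1, h2, h3⟩ | ⟨h1, h2, h3⟩ | ⟨h1, h2, h3⟩
      | ⟨h1, h2, h3⟩ | ⟨h1, h2, h3⟩ | ⟨h1, h2, h3⟩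
    · rw [master_ne hF2 hm1 (honeZ h1) (honeZ h2) (honeZ h3), hone h1, hone h2, hone h3]
      simp only [CFa]; ring
    · rw [master_ne hF2 hm1 (hnegZ h1) (hnegZ h2) (honeZ h3), hneg h1, hneg h2, hone h3]
      simp only [CFa]; ring
    · rw [master_ne hF2 hm1 (hnegZ h1) (honeZ h2) (hnegZ h3), hneg h1, hone h2, hneg h3]
      simp only [CFa]; ring
    · rw [master_ne hF2 hm1 (honeZ h1) (hnegZ h2) (hnegZ h3), hone h1, hneg h2, hneg h3]
      simp only [CFa]; ring
    · rw [TS_swap02, master_zero hF2 hm1 h3 (hnegZ h2) (hnegZ h1), hneg h1, hneg h2]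
      simp only [CFb]; ring
    · rw [TS_swap01, master_zero hF2 hm1 h2 (hnegZ h1) (hnegZ h3), hneg h1, hneg h3]
      simp only [CFb]; ring
    · rw [master_zero hF2 hm1 h1 (hnegZ h2) (hnegZ h3), hneg h2, hneg h3]
      simp only [CFb]; ring
  have hsum := sum_eq p hh d e0 e1 e2 hp hp3 hh0 hcard hd
  rw [card_split d e0 e1 e2 hd0, proj_card d e0 e1 e2] at hsum
  set NP := Nat.card {x : Projectivization F (Fin 3 → F) //
      MvPolynomial.eval x.rep (fermatSlice F d e0 e1 e2) = 0} with hNP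
  have hcast : ((NP * (Fintype.card F - 1) + 1 : ℕ) : ℤ) = NP * (qZ - 1) + 1 := by
    have hc1 : 1 ≤ Fintype.card F := Fintype.card_pos
    push_cast [Nat.cast_sub hc1]
    ring
  rw [hcast, hTSval] at hsum
  have hq1 : qZ - 1 ≠ 0 := by
    have : (5 : ℤ) ≤ qZ := by exact_mod_cast hq5
    omega
  have hmul : (8 * (NP : ℤ)) * (qZ - 1) = (3 * qZ ^ 2 - 12 * qZ + 33) * (qZ - 1) := by
    ring_nf
    ring_nf at hsum
    linarith [hsum]
  exact mul_right_cancel₀ hq1 hmul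

end Statement14Aux

/-- If `d` is odd and either (a) `η(e0) = η(e1) = η(e2) = 1`, or (b) exactly
two of `η(e0), η(e1), η(e2)` equal `-1` and the third equals `1`, or (c) exactly two equal
`-1` and the third equals `0`, then the number of points of `ℙ²(F_q)` on the curve `C = 0`
equals `(3q² - 12q + 33)/8` (i.e. `n(n + q - 1)/2 - 3(n - 2)/2` with `n = (q-1)/2`). -/
theorem statement14 (p h : ℕ) (hp : Nat.Prime p) (hp3 : 3 < p) (hh : 0 < h)
    (F : Type) [Field F] [Fintype F] (hcard : Fintype.card F = p ^ h)
    (d : ℕ) (hd : p ^ h = 2 * d + 1) (hodd : Odd d) (e0 e1 e2 : F)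
    (hcase :
      (e0 ^ d = 1 ∧ e1 ^ d = 1 ∧ e2 ^ d = 1) ∨
      (e0 ^ d = -1 ∧ e1 ^ d = -1 ∧ e2 ^ d = 1) ∨
      (e0 ^ d = -1 ∧ e1 ^ d = 1 ∧ e2 ^ d = -1) ∨
      (e0 ^ d = 1 ∧ e1 ^ d = -1 ∧ e2 ^ d = -1) ∨
      (e0 ^ d = -1 ∧ e1 ^ d = -1 ∧ e2 = 0) ∨
      (e0 ^ d = -1 ∧ e1 = 0 ∧ e2 ^ d = -1) ∨
      (e0 = 0 ∧ e1 ^ d = -1 ∧ e2 ^ d = -1)) :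
    (8 * Nat.card {x : Projectivization F (Fin 3 → F) //
        MvPolynomial.eval x.rep (fermatSlice F d e0 e1 e2) = 0} : ℤ) =
      3 * (p ^ h : ℤ) ^ 2 - 12 * (p ^ h : ℤ) + 33 := by
  classical
  have key := Statement14Aux.final_aux p h d e0 e1 e2 hp hp3 hh hcard hd hodd hcase
  rw [key, hcard]
  push_cast
  ring
end

section
/- Suppose d is odd and exactly one of η(e0), η(e1), η(e2) equals -1 while the other two equal 1. Then the number of points (x0 : x1 : x2) ∈ ℙ²(F_q) with C(x0, x1, x2) = 0 equals (3q² - 6q + 23)/8; equivalently, writing n = (q-3)/2 for the degree of the nonlinear part of C, it equals n(n + q - 1)/2 + (q + 1). -/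
open MvPolynomial

open Finset

set_option linter.unusedSectionVars false

section base
variable {F : Type} [Field F] [Fintype F] [DecidableEq F]

local notation "χ" => quadraticChar F
local notation "qq" => (Fintype.card F : ℤ)

lemma tri (t : F) : χ t = -1 ∨ χ t = 0 ∨ χ t = 1 := by
  by_cases h : t = 0
  · simp [h]
  · rcases quadraticChar_dichotomy h with h1 | h1
    · right; right; exact h1
    · left; exact h1

lemma chisq (t : F) : (χ t) ^ 2 = 1 - (if t = 0 then 1 else 0) := by
  by_cases h : t = 0
  · simp [h]
  · rw [quadraticChar_sq_one h]; simp [h]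

lemma sum_delta (z : F) (g : F → ℤ) :
    (∑ t : F, (if t = z then g t else 0)) = g z := by
  rw [Finset.sum_ite_eq' Finset.univ z g]; simp

variable (hF2 : ringChar F ≠ 2)
include hF2

lemma A1 : ∑ t : F, (χ t : ℤ) = 0 := quadraticChar_sum_zero hF2

omit hF2 in
lemma A2 : ∑ t : F, (χ t : ℤ) ^ 2 = qq - 1 := by
  have : ∀ t : F, (χ t : ℤ) ^ 2 = 1 - (if t = 0 then 1 else 0) := chisq
  rw [Finset.sum_congr rfl fun t _ => this t]
  rw [Finset.sum_sub_distrib, Finset.sum_const, sum_delta 0 (fun _ => (1:ℤ))]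
  simp [mul_comm]

omit hF2 in
lemma sum_affine (c : F) (hc : c ≠ 0) (A : F) (g : F → ℤ) :
    ∑ t : F, g (c * t + A) = ∑ t : F, g t := by
  have := Equiv.sum_comp ((Equiv.mulLeft₀ c hc).trans (Equiv.addRight A)) g
  simpa using this

lemma LJ (α : F) (hα : α ≠ 0) : ∑ t : F, (χ t : ℤ) * χ (t + α) = -1 := by
  classical
  have h0 : ∑ t : F, (χ t : ℤ) * χ (t + α) =
      ∑ t ∈ Finset.univ.erase (0 : F), (χ t : ℤ) * χ (t + α) := by
    rw [← Finset.add_sum_erase Finset.univ _ (Finset.mem_univ (0 : F))]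
    simp
  rw [h0]
  have h1 : ∀ t ∈ Finset.univ.erase (0 : F),
      (χ t : ℤ) * χ (t + α) = χ (1 + α * t⁻¹) := by
    intro t ht
    have ht0 : t ≠ 0 := (Finset.mem_erase.mp ht).1
    have harg : t * (t + α) = t ^ 2 * (1 + α * t⁻¹) := by
      field_simp
    calc (χ t : ℤ) * χ (t + α) = χ (t * (t + α)) := (map_mul _ _ _).symm
      _ = χ (t ^ 2 * (1 + α * t⁻¹)) := by rw [harg]
      _ = χ (t ^ 2) * χ (1 + α * t⁻¹) := map_mul _ _ _
      _ = χ (1 + α * t⁻¹) := by rw [quadraticChar_sq_one' ht0, one_mul]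
  rw [Finset.sum_congr rfl h1]
  have h2 : ∑ t ∈ Finset.univ.erase (0 : F), (χ (1 + α * t⁻¹) : ℤ) =
      ∑ y ∈ Finset.univ.erase (1 : F), (χ y : ℤ) := by
    apply Finset.sum_nbij' (fun t => 1 + α * t⁻¹) (fun y => α * (y - 1)⁻¹)
    · intro t ht
      have ht0 : t ≠ 0 := (Finset.mem_erase.mp ht).1
      simp only [Finset.mem_erase, Finset.mem_univ, and_true]
      intro hcon
      have : α * t⁻¹ = 0 := by linear_combination hcon
      rcases mul_eq_zero.mp this with h | h
      · exact hα h
      · exact ht0 (inv_eq_zero.mp h)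
    · intro y hy
      have hy1 : y ≠ 1 := (Finset.mem_erase.mp hy).1
      simp only [Finset.mem_erase, Finset.mem_univ, and_true]
      exact mul_ne_zero hα (inv_ne_zero (sub_ne_zero.mpr hy1))
    · intro t ht
      have ht0 : t ≠ 0 := (Finset.mem_erase.mp ht).1
      field_simp
      simp [hα]
    · intro y hy
      have hy1 : y ≠ 1 := (Finset.mem_erase.mp hy).1
      have : y - 1 ≠ 0 := sub_ne_zero.mpr hy1
      field_simp
      ring
    · intro t ht; rfl
  rw [h2, ← Finset.add_sum_erase Finset.univ _ (Finset.mem_univ (1 : F))] at *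
  have := quadraticChar_sum_zero hF2
  rw [← Finset.add_sum_erase Finset.univ _ (Finset.mem_univ (1 : F))] at this
  simp only [map_one] at this ⊢
  omega

end base
section base2
variable {F : Type} [Field F] [Fintype F] [DecidableEq F]

local notation "χ" => quadraticChar F
local notation "qq" => (Fintype.card F : ℤ)

variable (hF2 : ringChar F ≠ 2) (hm1 : quadraticChar F (-1 : F) = -1)

omit hF2 hm1 in
lemma chiinv (c : F) (hc : c ≠ 0) : (χ c⁻¹ : ℤ) = χ c := by
  have h1 : (χ c : ℤ) * χ c⁻¹ = 1 := by
    rw [← map_mul, mul_inv_cancel₀ hc, map_one]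
  have h2 : (χ c : ℤ) * χ c = 1 := by
    rw [← pow_two]; exact quadraticChar_sq_one hc
  have hc0 : (χ c : ℤ) ≠ 0 := fun h0 => hc (quadraticChar_eq_zero_iff.mp h0)
  exact mul_left_cancel₀ hc0 (h1.trans h2.symm)

omit hF2 hm1 in
lemma root_iff (c : F) (hc : c ≠ 0) (A t : F) : c * t + A = 0 ↔ t = -(A * c⁻¹) := by
  constructor
  · intro h
    have h' : c * t = -A := eq_neg_of_add_eq_zero_left h
    calc t = c⁻¹ * (c * t) := by field_simp
      _ = c⁻¹ * (-A) := by rw [h']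
      _ = -(A * c⁻¹) := by ring
  · intro h
    rw [h]
    field_simp
    ring

omit hF2 in
include hm1 in
lemma chi_root (c : F) (hc : c ≠ 0) (A : F) : (χ (-(A * c⁻¹)) : ℤ) = -(χ c * χ A) := by
  have h : -(A * c⁻¹) = -1 * A * c⁻¹ := by ring
  rw [h, map_mul, map_mul, hm1, chiinv c hc]; ring

include hF2 in
lemma B0 (c : F) (hc : c ≠ 0) (A : F) : ∑ t : F, (χ (c * t + A) : ℤ) = 0 :=
  (sum_affine c hc A fun t => (χ t : ℤ)).trans (A1 hF2)

omit hF2 hm1 in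
lemma C0 (c : F) (hc : c ≠ 0) (A : F) : ∑ t : F, (χ (c * t + A) : ℤ) ^ 2 = qq - 1 :=
  (sum_affine c hc A fun t => (χ t : ℤ) ^ 2).trans A2

include hF2 in
lemma B1 (c : F) (hc : c ≠ 0) (A : F) :
    ∑ t : F, (χ t : ℤ) * χ (c * t + A) =
      χ c * (qq * (if A = 0 then (1:ℤ) else 0) - 1) := by
  have hpt : ∀ t : F, (χ t : ℤ) * χ (c * t + A) = χ c * ((χ t : ℤ) * χ (t + A * c⁻¹)) := by
    intro t
    have harg : c * t + A = c * (t + A * c⁻¹) := by field_simp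
    rw [harg, map_mul]; ring
  rw [Finset.sum_congr rfl fun t _ => hpt t, ← Finset.mul_sum]
  by_cases hA : A = 0
  · subst hA
    simp only [zero_mul, add_zero]
    have h2 : ∑ t : F, (χ t : ℤ) * χ t = qq - 1 := by
      have := A2 (F := F)
      simpa [pow_two] using this
    rw [h2]
    simp
  · have hα : A * c⁻¹ ≠ 0 := mul_ne_zero hA (inv_ne_zero hc)
    rw [LJ hF2 _ hα]
    simp [hA]

include hF2 in
lemma B2 (c : F) (hc : c ≠ 0) (A : F) :
    ∑ t : F, (χ t : ℤ) ^ 2 * χ (c * t + A) = -(χ A : ℤ) := by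
  have hpt : ∀ t : F, (χ t : ℤ) ^ 2 * χ (c * t + A) =
      χ (c * t + A) - (if t = 0 then (χ (c * t + A) : ℤ) else 0) := by
    intro t
    by_cases h : t = 0
    · simp [h]
    · rw [quadraticChar_sq_one h]; simp [h]
  rw [Finset.sum_congr rfl fun t _ => hpt t, Finset.sum_sub_distrib, B0 hF2 c hc A,
    sum_delta 0 (fun t => (χ (c * t + A) : ℤ))]
  simp

include hF2 hm1 in
lemma C1 (c : F) (hc : c ≠ 0) (A : F) :
    ∑ t : F, (χ t : ℤ) * χ (c * t + A) ^ 2 = χ c * χ A := by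
  have hpt : ∀ t : F, (χ t : ℤ) * χ (c * t + A) ^ 2 =
      χ t - (if t = -(A * c⁻¹) then (χ t : ℤ) else 0) := by
    intro t
    by_cases h : c * t + A = 0
    · have ht : t = -(A * c⁻¹) := (root_iff c hc A t).mp h
      rw [if_pos ht, h]
      simp
    · have ht : ¬ t = -(A * c⁻¹) := fun hh => h ((root_iff c hc A t).mpr hh)
      rw [quadraticChar_sq_one h, if_neg ht]
      ring
  rw [Finset.sum_congr rfl fun t _ => hpt t, Finset.sum_sub_distrib,
    sum_delta (-(A * c⁻¹)) (fun t => (χ t : ℤ)), chi_root hm1 c hc A, A1 hF2]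
  ring

omit hF2 hm1 in
lemma C2 (c : F) (hc : c ≠ 0) (A : F) :
    ∑ t : F, (χ t : ℤ) ^ 2 * χ (c * t + A) ^ 2 =
      qq - 2 + (if A = 0 then (1:ℤ) else 0) := by
  have hpt : ∀ t : F, (χ t : ℤ) ^ 2 * χ (c * t + A) ^ 2 =
      χ (c * t + A) ^ 2 - (if t = 0 then (χ (c * t + A) : ℤ) ^ 2 else 0) := by
    intro t
    by_cases h : t = 0
    · simp [h]
    · rw [quadraticChar_sq_one h]; simp [h]
  rw [Finset.sum_congr rfl fun t _ => hpt t, Finset.sum_sub_distrib, C0 c hc A,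
    sum_delta 0 (fun t => (χ (c * t + A) : ℤ) ^ 2)]
  rw [mul_zero, zero_add, chisq]
  ring

omit hF2 hm1 in
lemma D0 (c : F) (hc : c ≠ 0) (A : F) :
    ∑ t : F, (if c * t + A = 0 then (1:ℤ) else 0) = 1 := by
  have hpt : ∀ t : F, (if c * t + A = 0 then (1:ℤ) else 0) =
      (if t = -(A * c⁻¹) then (1:ℤ) else 0) := by
    intro t
    exact if_congr (root_iff c hc A t) rfl rfl
  rw [Finset.sum_congr rfl fun t _ => hpt t, sum_delta (-(A * c⁻¹)) (fun _ => (1:ℤ))]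

omit hF2 in
include hm1 in
lemma D1 (c : F) (hc : c ≠ 0) (A : F) :
    ∑ t : F, (χ t : ℤ) * (if c * t + A = 0 then (1:ℤ) else 0) = -(χ c * χ A) := by
  have hpt : ∀ t : F, (χ t : ℤ) * (if c * t + A = 0 then (1:ℤ) else 0) =
      (if t = -(A * c⁻¹) then (χ t : ℤ) else 0) := by
    intro t
    rw [if_congr (root_iff c hc A t) rfl rfl]
    by_cases h : t = -(A * c⁻¹) <;> simp [h]
  rw [Finset.sum_congr rfl fun t _ => hpt t, sum_delta (-(A * c⁻¹)) (fun t => (χ t : ℤ)),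
    chi_root hm1 c hc A]

omit hF2 hm1 in
lemma D2 (c : F) (hc : c ≠ 0) (A : F) :
    ∑ t : F, (χ t : ℤ) ^ 2 * (if c * t + A = 0 then (1:ℤ) else 0) =
      1 - (if A = 0 then (1:ℤ) else 0) := by
  have hpt : ∀ t : F, (χ t : ℤ) ^ 2 * (if c * t + A = 0 then (1:ℤ) else 0) =
      (if t = -(A * c⁻¹) then (χ t : ℤ) ^ 2 else 0) := by
    intro t
    rw [if_congr (root_iff c hc A t) rfl rfl]
    by_cases h : t = -(A * c⁻¹) <;> simp [h]
  rw [Finset.sum_congr rfl fun t _ => hpt t, sum_delta (-(A * c⁻¹)) (fun t => (χ t : ℤ) ^ 2),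
    chisq]
  have hiff : -(A * c⁻¹) = 0 ↔ A = 0 := by
    constructor
    · intro h
      rcases mul_eq_zero.mp (neg_eq_zero.mp h) with h | h
      · exact h
      · exact absurd (inv_eq_zero.mp h) hc
    · intro h; simp [h]
  rw [if_congr hiff rfl rfl]

end base2
section stages
variable {F : Type} [Field F] [Fintype F] [DecidableEq F]

local notation "χ" => quadraticChar F
local notation "qq" => (Fintype.card F : ℤ)

lemma sum_comb8 (K0 K1 K2 K3 K4 K5 K6 K7 K8 : ℤ) (g1 g2 g3 g4 g5 g6 g7 g8 : F → ℤ)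
    (S1 S2 S3 S4 S5 S6 S7 S8 : ℤ)
    (h1 : ∑ t : F, g1 t = S1) (h2 : ∑ t : F, g2 t = S2) (h3 : ∑ t : F, g3 t = S3)
    (h4 : ∑ t : F, g4 t = S4) (h5 : ∑ t : F, g5 t = S5) (h6 : ∑ t : F, g6 t = S6)
    (h7 : ∑ t : F, g7 t = S7) (h8 : ∑ t : F, g8 t = S8) :
    ∑ t : F, (K0 + K1 * g1 t + K2 * g2 t + K3 * g3 t + K4 * g4 t + K5 * g5 t
        + K6 * g6 t + K7 * g7 t + K8 * g8 t) =
      qq * K0 + K1 * S1 + K2 * S2 + K3 * S3 + K4 * S4 + K5 * S5 + K6 * S6 + K7 * S7 + K8 * S8 := by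
  simp only [Finset.sum_add_distrib, ← Finset.mul_sum, h1, h2, h3, h4, h5, h6, h7, h8,
    Finset.sum_const, Finset.card_univ, nsmul_eq_mul]

lemma sum_comb4 (K0 K1 K2 K3 K4 : ℤ) (g1 g2 g3 g4 : F → ℤ) (S1 S2 S3 S4 : ℤ)
    (h1 : ∑ t : F, g1 t = S1) (h2 : ∑ t : F, g2 t = S2) (h3 : ∑ t : F, g3 t = S3)
    (h4 : ∑ t : F, g4 t = S4) :
    ∑ t : F, (K0 + K1 * g1 t + K2 * g2 t + K3 * g3 t + K4 * g4 t) =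
      qq * K0 + K1 * S1 + K2 * S2 + K3 * S3 + K4 * S4 := by
  simp only [Finset.sum_add_distrib, ← Finset.mul_sum, h1, h2, h3, h4,
    Finset.sum_const, Finset.card_univ, nsmul_eq_mul]

lemma sum_comb3 (K0 K1 K2 K3 : ℤ) (g1 g2 g3 : F → ℤ) (S1 S2 S3 : ℤ)
    (h1 : ∑ t : F, g1 t = S1) (h2 : ∑ t : F, g2 t = S2) (h3 : ∑ t : F, g3 t = S3) :
    ∑ t : F, (K0 + K1 * g1 t + K2 * g2 t + K3 * g3 t) =
      qq * K0 + K1 * S1 + K2 * S2 + K3 * S3 := by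
  simp only [Finset.sum_add_distrib, ← Finset.mul_sum, h1, h2, h3,
    Finset.sum_const, Finset.card_univ, nsmul_eq_mul]

lemma point16 (a b x y : ℤ) (ha : a = -1 ∨ a = 0 ∨ a = 1) (hb : b = -1 ∨ b = 0 ∨ b = 1)
    (hx : x = -1 ∨ x = 0 ∨ x = 1) (hy : y = -1 ∨ y = 0 ∨ y = 1) :
    (if a + b + x + y = 0 then (16:ℤ) else 0) =
      ((16) + (-16) * b * b + (-8) * a * b + (-16) * a * a + (24) * a * a * b * b)
      + ((-8) * b + (-8) * a + (8) * a * b * b + (8) * a * a * b) * y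
      + ((-16) + (24) * b * b + (8) * a * b + (24) * a * a + (-40) * a * a * b * b) * y ^ 2
      + ((-8) * b + (-8) * a + (8) * a * b * b + (8) * a * a * b) * x
      + ((-8) + (8) * b * b + (6) * a * b + (8) * a * a + (-10) * a * a * b * b) * (x * y)
      + ((8) * b + (8) * a + (-10) * a * b * b + (-10) * a * a * b) * (x * y ^ 2)
      + ((-16) + (24) * b * b + (8) * a * b + (24) * a * a + (-40) * a * a * b * b) * x ^ 2
      + ((8) * b + (8) * a + (-10) * a * b * b + (-10) * a * a * b) * (x ^ 2 * y)
      + ((24) + (-40) * b * b + (-10) * a * b + (-40) * a * a + (70) * a * a * b * b) * (x ^ 2 * y ^ 2) := by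
  rcases ha with rfl | rfl | rfl <;> rcases hb with rfl | rfl | rfl <;>
    rcases hx with rfl | rfl | rfl <;> rcases hy with rfl | rfl | rfl <;> norm_num

variable (hF2 : ringChar F ≠ 2) (hm1 : quadraticChar F (-1 : F) = -1)

include hF2 hm1 in
lemma stage1 (c : F) (hc : c ≠ 0) (A : F) (a b : ℤ)
    (ha : a = -1 ∨ a = 0 ∨ a = 1) (hb : b = -1 ∨ b = 0 ∨ b = 1) :
    ∑ w : F, (if a + b + χ w + χ (c * w + A) = 0 then (16:ℤ) else 0) =
      ((-16) + (8) * χ c + (8) * qq + (32) * a * a + (-8) * a * a * χ c + (-8) * a * a * qq)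
      + ((4) * a + (-6) * a * χ c + (-2) * a * qq) * b
      + ((32) + (-8) * χ c + (-8) * qq + (-60) * a * a + (10) * a * a * χ c + (14) * a * a * qq) * b ^ 2
      + ((-8) * a + (8) * a * χ c) * χ A
      + ((-8) + (8) * χ c + (10) * a * a + (-10) * a * a * χ c) * (b * χ A)
      + ((10) * a + (-10) * a * χ c) * (b ^ 2 * χ A)
      + ((24) + (-8) * qq * χ c + (-40) * a * a + (8) * a * a * qq * χ c) * (if A = 0 then (1:ℤ) else 0)
      + ((-10) * a + (6) * a * qq * χ c) * (b * (if A = 0 then (1:ℤ) else 0))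
      + ((-40) + (8) * qq * χ c + (70) * a * a + (-10) * a * a * qq * χ c) * (b ^ 2 * (if A = 0 then (1:ℤ) else 0)) := by
  have step1 : ∀ w : F, (if a + b + χ w + χ (c * w + A) = 0 then (16:ℤ) else 0) =
      ((16) + (-16) * b * b + (-8) * a * b + (-16) * a * a + (24) * a * a * b * b)
      + ((-8) * b + (-8) * a + (8) * a * b * b + (8) * a * a * b) * χ (c * w + A)
      + ((-16) + (24) * b * b + (8) * a * b + (24) * a * a + (-40) * a * a * b * b) * χ (c * w + A) ^ 2
      + ((-8) * b + (-8) * a + (8) * a * b * b + (8) * a * a * b) * χ w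
      + ((-8) + (8) * b * b + (6) * a * b + (8) * a * a + (-10) * a * a * b * b) * (χ w * χ (c * w + A))
      + ((8) * b + (8) * a + (-10) * a * b * b + (-10) * a * a * b) * (χ w * χ (c * w + A) ^ 2)
      + ((-16) + (24) * b * b + (8) * a * b + (24) * a * a + (-40) * a * a * b * b) * χ w ^ 2
      + ((8) * b + (8) * a + (-10) * a * b * b + (-10) * a * a * b) * (χ w ^ 2 * χ (c * w + A))
      + ((24) + (-40) * b * b + (-10) * a * b + (-40) * a * a + (70) * a * a * b * b) * (χ w ^ 2 * χ (c * w + A) ^ 2) :=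
    fun w => point16 a b (χ w) (χ (c * w + A)) ha hb (tri w) (tri (c * w + A))
  rw [Finset.sum_congr rfl fun w _ => step1 w]
  have main := sum_comb8 (F := F)
    ((16) + (-16) * b * b + (-8) * a * b + (-16) * a * a + (24) * a * a * b * b)
    ((-8) * b + (-8) * a + (8) * a * b * b + (8) * a * a * b)
    ((-16) + (24) * b * b + (8) * a * b + (24) * a * a + (-40) * a * a * b * b)
    ((-8) * b + (-8) * a + (8) * a * b * b + (8) * a * a * b)
    ((-8) + (8) * b * b + (6) * a * b + (8) * a * a + (-10) * a * a * b * b)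
    ((8) * b + (8) * a + (-10) * a * b * b + (-10) * a * a * b)
    ((-16) + (24) * b * b + (8) * a * b + (24) * a * a + (-40) * a * a * b * b)
    ((8) * b + (8) * a + (-10) * a * b * b + (-10) * a * a * b)
    ((24) + (-40) * b * b + (-10) * a * b + (-40) * a * a + (70) * a * a * b * b)
    (fun w => χ (c * w + A)) (fun w => χ (c * w + A) ^ 2) (fun w => χ w)
    (fun w => χ w * χ (c * w + A)) (fun w => χ w * χ (c * w + A) ^ 2) (fun w => χ w ^ 2)
    (fun w => χ w ^ 2 * χ (c * w + A)) (fun w => χ w ^ 2 * χ (c * w + A) ^ 2)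
    _ _ _ _ _ _ _ _
    (B0 hF2 c hc A) (C0 c hc A) (A1 hF2) (B1 hF2 c hc A) (C1 hF2 hm1 c hc A) A2
    (B2 hF2 c hc A) (C2 c hc A)
  rw [main]
  ring

include hF2 hm1 in
lemma stage2 (c1 c2 : F) (hc1 : c1 ≠ 0) (hc2 : c2 ≠ 0) (B : F) (a : ℤ)
    (ha : a = -1 ∨ a = 0 ∨ a = 1) :
    ∑ v : F, ∑ w : F, (if a + χ v + χ w + χ (c2 * w + (c1 * v + B)) = 0 then (16:ℤ) else 0) =
      ((-48) + (8) * χ c2 + (8) * χ c1 + (-8) * χ c1 * χ c2 + (24) * qq)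
      + ((90) + (-10) * χ c2 + (-10) * χ c1 + (10) * χ c1 * χ c2 + (-42) * qq + (6) * qq * qq) * a ^ 2
      + ((-10) + (10) * χ c2 + (10) * χ c1 + (-6) * qq * χ c1 * χ c2) * (a * χ B)
      + ((40) + (-8) * qq * χ c2 + (-8) * qq * χ c1 + (8) * qq * χ c1 * χ c2) * (if B = 0 then (1:ℤ) else 0)
      + ((-70) + (10) * qq * χ c2 + (10) * qq * χ c1 + (-10) * qq * χ c1 * χ c2) * (a ^ 2 * (if B = 0 then (1:ℤ) else 0)) := by
  have step1 : ∀ v : F,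
      ∑ w : F, (if a + χ v + χ w + χ (c2 * w + (c1 * v + B)) = 0 then (16:ℤ) else 0) =
      ((-16) + (8) * χ c2 + (8) * qq + (32) * a * a + (-8) * a * a * χ c2 + (-8) * a * a * qq)
      + ((4) * a + (-6) * a * χ c2 + (-2) * a * qq) * χ v
      + ((32) + (-8) * χ c2 + (-8) * qq + (-60) * a * a + (10) * a * a * χ c2 + (14) * a * a * qq) * χ v ^ 2
      + ((-8) * a + (8) * a * χ c2) * χ (c1 * v + B)
      + ((-8) + (8) * χ c2 + (10) * a * a + (-10) * a * a * χ c2) * (χ v * χ (c1 * v + B))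
      + ((10) * a + (-10) * a * χ c2) * (χ v ^ 2 * χ (c1 * v + B))
      + ((24) + (-8) * qq * χ c2 + (-40) * a * a + (8) * a * a * qq * χ c2) * (if c1 * v + B = 0 then (1:ℤ) else 0)
      + ((-10) * a + (6) * a * qq * χ c2) * (χ v * (if c1 * v + B = 0 then (1:ℤ) else 0))
      + ((-40) + (8) * qq * χ c2 + (70) * a * a + (-10) * a * a * qq * χ c2) * (χ v ^ 2 * (if c1 * v + B = 0 then (1:ℤ) else 0)) :=
    fun v => stage1 hF2 hm1 c2 hc2 (c1 * v + B) a (χ v) ha (tri v)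
  rw [Finset.sum_congr rfl fun v _ => step1 v]
  have main := sum_comb8 (F := F)
    ((-16) + (8) * χ c2 + (8) * qq + (32) * a * a + (-8) * a * a * χ c2 + (-8) * a * a * qq)
    ((4) * a + (-6) * a * χ c2 + (-2) * a * qq)
    ((32) + (-8) * χ c2 + (-8) * qq + (-60) * a * a + (10) * a * a * χ c2 + (14) * a * a * qq)
    ((-8) * a + (8) * a * χ c2)
    ((-8) + (8) * χ c2 + (10) * a * a + (-10) * a * a * χ c2)
    ((10) * a + (-10) * a * χ c2)
    ((24) + (-8) * qq * χ c2 + (-40) * a * a + (8) * a * a * qq * χ c2)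
    ((-10) * a + (6) * a * qq * χ c2)
    ((-40) + (8) * qq * χ c2 + (70) * a * a + (-10) * a * a * qq * χ c2)
    (fun v => χ v) (fun v => χ v ^ 2) (fun v => χ (c1 * v + B))
    (fun v => χ v * χ (c1 * v + B)) (fun v => χ v ^ 2 * χ (c1 * v + B))
    (fun v => if c1 * v + B = 0 then (1:ℤ) else 0)
    (fun v => χ v * (if c1 * v + B = 0 then (1:ℤ) else 0))
    (fun v => χ v ^ 2 * (if c1 * v + B = 0 then (1:ℤ) else 0))
    _ _ _ _ _ _ _ _
    (A1 hF2) A2 (B0 hF2 c1 hc1 B) (B1 hF2 c1 hc1 B) (B2 hF2 c1 hc1 B)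
    (D0 c1 hc1 B) (D1 hm1 c1 hc1 B) (D2 c1 hc1 B)
  rw [main]
  ring

include hF2 hm1 in
lemma stage3 (c0 c1 c2 : F) (hc0 : c0 ≠ 0) (hc1 : c1 ≠ 0) (hc2 : c2 ≠ 0) :
    ∑ u : F, ∑ v : F, ∑ w : F,
        (if χ u + χ v + χ w + χ (c2 * w + (c1 * v + c0 * u)) = 0 then (16:ℤ) else 0) =
      (-50) + (10) * χ c2 + (10) * χ c1 + (-10) * χ c1 * χ c2 + (10) * χ c0 + (-10) * χ c0 * χ c2
      + (-10) * χ c0 * χ c1 + (84) * qq + (-10) * qq * χ c2 + (-10) * qq * χ c1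
      + (10) * qq * χ c1 * χ c2 + (-10) * qq * χ c0 + (10) * qq * χ c0 * χ c2
      + (10) * qq * χ c0 * χ c1 + (6) * qq * χ c0 * χ c1 * χ c2 + (-24) * qq * qq
      + (-6) * qq * qq * χ c0 * χ c1 * χ c2 + (6) * qq * qq * qq := by
  have step1 : ∀ u : F,
      ∑ v : F, ∑ w : F,
        (if χ u + χ v + χ w + χ (c2 * w + (c1 * v + c0 * u)) = 0 then (16:ℤ) else 0) =
      ((-48) + (8) * χ c2 + (8) * χ c1 + (-8) * χ c1 * χ c2 + (24) * qq)
      + ((90) + (-10) * χ c2 + (-10) * χ c1 + (10) * χ c1 * χ c2 + (-10) * χ c0 + (10) * χ c0 * χ c2 + (10) * χ c0 * χ c1 + (-42) * qq + (-6) * qq * χ c0 * χ c1 * χ c2 + (6) * qq * qq) * (χ u ^ 2)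
      + ((40) + (-8) * qq * χ c2 + (-8) * qq * χ c1 + (8) * qq * χ c1 * χ c2) * (if u = 0 then (1:ℤ) else 0)
      + ((-70) + (10) * qq * χ c2 + (10) * qq * χ c1 + (-10) * qq * χ c1 * χ c2) * (χ u ^ 2 * (if u = 0 then (1:ℤ) else 0)) := by
    intro u
    rw [stage2 hF2 hm1 c1 c2 hc1 hc2 (c0 * u) (χ u) (tri u)]
    rw [show (χ (c0 * u) : ℤ) = χ c0 * χ u from map_mul _ _ _,
      show (if c0 * u = 0 then (1:ℤ) else 0) = (if u = 0 then (1:ℤ) else 0) from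
        if_congr (by simp [mul_eq_zero, hc0]) rfl rfl]
    ring
  rw [Finset.sum_congr rfl fun u _ => step1 u]
  have hg2 : ∑ u : F, (if u = 0 then (1:ℤ) else 0) = 1 := sum_delta 0 (fun _ => (1:ℤ))
  have hg3 : ∑ u : F, (χ u : ℤ) ^ 2 * (if u = 0 then (1:ℤ) else 0) = 0 := by
    have hpt : ∀ u : F, (χ u : ℤ) ^ 2 * (if u = 0 then (1:ℤ) else 0) =
        (if u = 0 then (χ u : ℤ) ^ 2 else 0) := by
      intro u; by_cases h : u = 0 <;> simp [h]
    rw [Finset.sum_congr rfl fun u _ => hpt u, sum_delta 0 (fun u => (χ u : ℤ) ^ 2)]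
    simp
  have main := sum_comb3 (F := F)
    ((-48) + (8) * χ c2 + (8) * χ c1 + (-8) * χ c1 * χ c2 + (24) * qq)
    ((90) + (-10) * χ c2 + (-10) * χ c1 + (10) * χ c1 * χ c2 + (-10) * χ c0 + (10) * χ c0 * χ c2 + (10) * χ c0 * χ c1 + (-42) * qq + (-6) * qq * χ c0 * χ c1 * χ c2 + (6) * qq * qq)
    ((40) + (-8) * qq * χ c2 + (-8) * qq * χ c1 + (8) * qq * χ c1 * χ c2)
    ((-70) + (10) * qq * χ c2 + (10) * qq * χ c1 + (-10) * qq * χ c1 * χ c2)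
    (fun u => (χ u : ℤ) ^ 2) (fun u => if u = 0 then (1:ℤ) else 0)
    (fun u => (χ u : ℤ) ^ 2 * (if u = 0 then (1:ℤ) else 0))
    _ _ _
    A2 hg2 hg3
  rw [main]
  ring

end stages


/-- If `d` is odd and exactly one of `η(e0), η(e1), η(e2)` equals `-1` while
the other two equal `1`, then the number of points of `ℙ²(F_q)` on the curve `C = 0`
equals `(3q² - 6q + 23)/8` (i.e. `n(n + q - 1)/2 + (q + 1)` with `n = (q-3)/2`). -/
theorem statement15 (p h : ℕ) (hp : Nat.Prime p) (hp3 : 3 < p) (hh : 0 < h)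
    (F : Type) [Field F] [Fintype F] (hcard : Fintype.card F = p ^ h)
    (d : ℕ) (hd : p ^ h = 2 * d + 1) (hodd : Odd d) (e0 e1 e2 : F)
    (hcase :
      (e0 ^ d = -1 ∧ e1 ^ d = 1 ∧ e2 ^ d = 1) ∨
      (e0 ^ d = 1 ∧ e1 ^ d = -1 ∧ e2 ^ d = 1) ∨
      (e0 ^ d = 1 ∧ e1 ^ d = 1 ∧ e2 ^ d = -1)) :
    (8 * Nat.card {x : Projectivization F (Fin 3 → F) //
        MvPolynomial.eval x.rep (fermatSlice F d e0 e1 e2) = 0} : ℤ) =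
      3 * (p ^ h : ℤ) ^ 2 - 6 * (p ^ h : ℤ) + 23 := by
  classical
  -- basic facts about p and the characteristic
  have hp5 : 5 ≤ p := by
    have h4 : p ≠ 4 := by rintro rfl; norm_num at hp
    omega
  have hph5 : 5 ≤ p ^ h := le_trans hp5 (Nat.le_self_pow hh.ne' p)
  haveI : CharP F (ringChar F) := ringChar.charP F
  obtain ⟨n, hrprime, hcardr⟩ := FiniteField.card F (ringChar F)
  have hpr : ringChar F = p := by
    have h1 : p ^ h = ringChar F ^ (n : ℕ) := by rw [← hcard, hcardr]
    have hpdvd : p ∣ ringChar F ^ (n : ℕ) := by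
      rw [← h1]; exact dvd_pow_self p hh.ne'
    have := Nat.Prime.dvd_of_dvd_pow hp hpdvd
    exact ((Nat.prime_dvd_prime_iff_eq hp hrprime).mp this).symm
  haveI hCp : CharP F p := by rw [← hpr]; infer_instance
  have hF2 : ringChar F ≠ 2 := by rw [hpr]; omega
  have hcardF : Fintype.card F = 2 * d + 1 := by rw [hcard, hd]
  have hd0 : d ≠ 0 := by omega
  have hm1 : quadraticChar F (-1 : F) = -1 := by
    apply quadraticChar_neg_one_iff_not_isSquare.mpr
    rw [FiniteField.isSquare_neg_one_iff]
    obtain ⟨k, hk⟩ := hodd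
    simp only [hcardF, hk]
    omega
  have hd2 : Fintype.card F / 2 = d := by omega
  have chipow : ∀ t : F, ((quadraticChar F t : ℤ) : F) = t ^ d := fun t => by
    rw [← hd2]; exact quadraticChar_eq_pow_of_char_ne_two' hF2 t
  -- 1 ≠ -1 in F
  have h2ne : (1 : F) ≠ -1 := by
    intro h12
    have h20 : ((2 : ℕ) : F) = 0 := by push_cast; linear_combination h12
    have := (CharP.cast_eq_zero_iff F p 2).mp h20
    have := Nat.le_of_dvd (by norm_num) this
    omega
  -- character values of the coefficients
  have echar : ∀ t : F, t ^ d = 1 → quadraticChar F t = 1 := by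
    intro t ht
    rcases tri t with h | h | h
    · exfalso
      have := chipow t
      rw [h, ht] at this
      push_cast at this
      exact h2ne this.symm
    · exfalso
      have := chipow t
      rw [h, ht] at this
      push_cast at this
      exact one_ne_zero this.symm
    · exact h
  have echarN : ∀ t : F, t ^ d = -1 → quadraticChar F t = -1 := by
    intro t ht
    rcases tri t with h | h | h
    · exact h
    · exfalso
      have := chipow t
      rw [h, ht] at this
      push_cast at this
      exact one_ne_zero (neg_eq_zero.mp this.symm)
    · exfalso
      have := chipow t
      rw [h, ht] at this
      push_cast at this
      exact h2ne this
  have hχ : (quadraticChar F e0 = -1 ∧ quadraticChar F e1 = 1 ∧ quadraticChar F e2 = 1) ∨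
      (quadraticChar F e0 = 1 ∧ quadraticChar F e1 = -1 ∧ quadraticChar F e2 = 1) ∨
      (quadraticChar F e0 = 1 ∧ quadraticChar F e1 = 1 ∧ quadraticChar F e2 = -1) := by
    rcases hcase with ⟨h0, h1, h2⟩ | ⟨h0, h1, h2⟩ | ⟨h0, h1, h2⟩
    · exact Or.inl ⟨echarN _ h0, echar _ h1, echar _ h2⟩
    · exact Or.inr (Or.inl ⟨echar _ h0, echarN _ h1, echar _ h2⟩)
    · exact Or.inr (Or.inr ⟨echar _ h0, echar _ h1, echarN _ h2⟩)
  have hne : ∀ t : F, quadraticChar F t = 1 ∨ quadraticChar F t = -1 → t ≠ 0 := by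
    intro t ht h0
    rw [h0, quadraticChar_zero] at ht
    rcases ht with ht | ht <;> norm_num at ht
  have he0 : e0 ≠ 0 := by
    rcases hχ with ⟨h0, _, _⟩ | ⟨h0, _, _⟩ | ⟨h0, _, _⟩
    exacts [hne _ (Or.inr h0), hne _ (Or.inl h0), hne _ (Or.inl h0)]
  have he1 : e1 ≠ 0 := by
    rcases hχ with ⟨_, h1, _⟩ | ⟨_, h1, _⟩ | ⟨_, h1, _⟩
    exacts [hne _ (Or.inl h1), hne _ (Or.inr h1), hne _ (Or.inl h1)]
  have he2 : e2 ≠ 0 := by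
    rcases hχ with ⟨_, _, h2⟩ | ⟨_, _, h2⟩ | ⟨_, _, h2⟩
    exacts [hne _ (Or.inl h2), hne _ (Or.inl h2), hne _ (Or.inr h2)]
  -- evaluation of the polynomial
  have evalC : ∀ x : Fin 3 → F, MvPolynomial.eval x (fermatSlice F d e0 e1 e2) =
      x 0 ^ d + x 1 ^ d + x 2 ^ d + (e0 * x 0 + e1 * x 1 + e2 * x 2) ^ d := by
    intro x
    simp [fermatSlice]
  -- the condition in terms of character sums
  have hcond : ∀ x : Fin 3 → F,
      (MvPolynomial.eval x (fermatSlice F d e0 e1 e2) = 0) ↔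
      ((quadraticChar F (x 0) + quadraticChar F (x 1) + quadraticChar F (x 2)
        + quadraticChar F (e2 * x 2 + (e1 * x 1 + e0 * x 0)) : ℤ) = 0) := by
    intro x
    have hrw : MvPolynomial.eval x (fermatSlice F d e0 e1 e2) =
        (((quadraticChar F (x 0) + quadraticChar F (x 1) + quadraticChar F (x 2)
          + quadraticChar F (e2 * x 2 + (e1 * x 1 + e0 * x 0)) : ℤ) : F)) := by
      rw [evalC x]
      push_cast
      rw [chipow, chipow, chipow, chipow]
      rw [show e2 * x 2 + (e1 * x 1 + e0 * x 0) = e0 * x 0 + e1 * x 1 + e2 * x 2 from by ring]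
    rw [hrw]
    constructor
    · intro h0
      have hdvd : (p : ℤ) ∣ (quadraticChar F (x 0) + quadraticChar F (x 1) + quadraticChar F (x 2)
          + quadraticChar F (e2 * x 2 + (e1 * x 1 + e0 * x 0)) : ℤ) :=
        (CharP.intCast_eq_zero_iff F p _).mp h0
      apply Int.eq_zero_of_abs_lt_dvd hdvd
      have b0 := tri (x 0)
      have b1 := tri (x 1)
      have b2 := tri (x 2)
      have b3 := tri (e2 * x 2 + (e1 * x 1 + e0 * x 0))
      have hp5' : (5 : ℤ) ≤ (p : ℤ) := by exact_mod_cast hp5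
      rcases b0 with h | h | h <;> rcases b1 with h' | h' | h' <;>
        rcases b2 with h'' | h'' | h'' <;> rcases b3 with h''' | h''' | h''' <;>
        rw [h, h', h'', h'''] <;> norm_num <;> omega
    · intro h0
      rw [h0]
      push_cast
      rfl
  -- convert the pi-type sum to a triple sum
  have hsum1 : ∑ x : Fin 3 → F,
      (if MvPolynomial.eval x (fermatSlice F d e0 e1 e2) = 0 then (16:ℤ) else 0) =
      ∑ u : F, ∑ v : F, ∑ w : F,
        (if (quadraticChar F u + quadraticChar F v + quadraticChar F w
          + quadraticChar F (e2 * w + (e1 * v + e0 * u)) : ℤ) = 0 then (16:ℤ) else 0) := by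
    have h1 : ∀ x : Fin 3 → F,
        (if MvPolynomial.eval x (fermatSlice F d e0 e1 e2) = 0 then (16:ℤ) else 0) =
        (if (quadraticChar F (x 0) + quadraticChar F (x 1) + quadraticChar F (x 2)
          + quadraticChar F (e2 * x 2 + (e1 * x 1 + e0 * x 0)) : ℤ) = 0 then (16:ℤ) else 0) :=
      fun x => if_congr (hcond x) rfl rfl
    rw [Finset.sum_congr rfl fun x _ => h1 x]
    let e : (F × F × F) ≃ (Fin 3 → F) :=
      { toFun := fun p => ![p.1, p.2.1, p.2.2]
        invFun := fun x => (x 0, x 1, x 2)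
        left_inv := fun p => rfl
        right_inv := fun x => by
          funext i
          fin_cases i <;> rfl }
    rw [← Equiv.sum_comp e (fun x : Fin 3 → F =>
      (if (quadraticChar F (x 0) + quadraticChar F (x 1) + quadraticChar F (x 2)
        + quadraticChar F (e2 * x 2 + (e1 * x 1 + e0 * x 0)) : ℤ) = 0 then (16:ℤ) else 0))]
    rw [Fintype.sum_prod_type]
    apply Finset.sum_congr rfl
    intro u _
    rw [Fintype.sum_prod_type]
    apply Finset.sum_congr rfl
    intro v _
    apply Finset.sum_congr rfl
    intro w _
    simp only [e, Equiv.coe_fn_mk, Matrix.cons_val_zero, Matrix.cons_val_one,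
      Matrix.cons_val_two, Matrix.head_cons, Matrix.tail_cons]
    rfl
  -- the key counting identity
  have hstage := stage3 hF2 hm1 e0 e1 e2 he0 he1 he2
  have hval : ∑ u : F, ∑ v : F, ∑ w : F,
      (if (quadraticChar F u + quadraticChar F v + quadraticChar F w
        + quadraticChar F (e2 * w + (e1 * v + e0 * u)) : ℤ) = 0 then (16:ℤ) else 0) =
      6 * (Fintype.card F : ℤ) ^ 3 - 18 * (Fintype.card F : ℤ) ^ 2
        + 58 * (Fintype.card F : ℤ) - 30 := by
    rw [hstage]
    rcases hχ with ⟨h0, h1, h2⟩ | ⟨h0, h1, h2⟩ | ⟨h0, h1, h2⟩ <;> rw [h0, h1, h2] <;> ring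
  -- counting via the filter
  set T := Finset.univ.filter
    (fun x : Fin 3 → F => MvPolynomial.eval x (fermatSlice F d e0 e1 e2) = 0) with hT
  have hsum2 : ∑ x : Fin 3 → F,
      (if MvPolynomial.eval x (fermatSlice F d e0 e1 e2) = 0 then (16:ℤ) else 0) =
      16 * (T.card : ℤ) := by
    rw [hT, ← Finset.sum_filter, Finset.sum_const, nsmul_eq_mul]
    ring
  have h0T : (0 : Fin 3 → F) ∈ T := by
    rw [hT, Finset.mem_filter]
    refine ⟨Finset.mem_univ _, ?_⟩
    rw [evalC]
    simp [zero_pow hd0]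
  -- homogeneity
  have hHom : ∀ (c : F) (v : Fin 3 → F),
      MvPolynomial.eval (c • v) (fermatSlice F d e0 e1 e2) =
        c ^ d * MvPolynomial.eval v (fermatSlice F d e0 e1 e2) := by
    intro c v
    rw [evalC, evalC]
    simp only [Pi.smul_apply, smul_eq_mul]
    rw [show e0 * (c * v 0) + e1 * (c * v 1) + e2 * (c * v 2)
        = c * (e0 * v 0 + e1 * v 1 + e2 * v 2) from by ring]
    rw [mul_pow, mul_pow, mul_pow, mul_pow]
    ring
  -- the projective count
  have hNcard : ((Finset.univ.filter (fun x : Fin 3 → F =>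
      MvPolynomial.eval x (fermatSlice F d e0 e1 e2) = 0 ∧ x ≠ 0)).card : ℤ) =
      (Nat.card {x : Projectivization F (Fin 3 → F) //
        MvPolynomial.eval x.rep (fermatSlice F d e0 e1 e2) = 0} : ℤ) *
        ((Fintype.card F : ℤ) - 1) := by
    set PS := {x : Projectivization F (Fin 3 → F) //
        MvPolynomial.eval x.rep (fermatSlice F d e0 e1 e2) = 0} with hPS
    let φ : PS × Fˣ → {x : Fin 3 → F //
        MvPolynomial.eval x (fermatSlice F d e0 e1 e2) = 0 ∧ x ≠ 0} := fun Pt =>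
      ⟨(Pt.2 : F) • Pt.1.1.rep, by
        constructor
        · rw [hHom, Pt.1.2, mul_zero]
        · exact smul_ne_zero (Units.ne_zero Pt.2) Pt.1.1.rep_nonzero⟩
    have hbij : Function.Bijective φ := by
      constructor
      · rintro ⟨⟨P, hP⟩, t⟩ ⟨⟨Q, hQ⟩, s⟩ hEq
        have hv : (t : F) • P.rep = (s : F) • Q.rep := congrArg Subtype.val hEq
        have htP : (t : F) • P.rep ≠ 0 :=
          smul_ne_zero (Units.ne_zero t) P.rep_nonzero
        have hPQ : P = Q := by
          have h1 : Projectivization.mk F ((t : F) • P.rep) htP =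
              Projectivization.mk F P.rep P.rep_nonzero :=
            (Projectivization.mk_eq_mk_iff' F _ _ _ _).mpr ⟨t, rfl⟩
          have h2 : Projectivization.mk F ((t : F) • P.rep) htP =
              Projectivization.mk F Q.rep Q.rep_nonzero :=
            (Projectivization.mk_eq_mk_iff' F _ _ _ _).mpr ⟨s, hv.symm⟩
          rw [Projectivization.mk_rep] at h1 h2
          rw [← h1, h2]
        subst hPQ
        have hts : (t : F) = s := by
          obtain ⟨i, hi⟩ := Function.ne_iff.mp P.rep_nonzero
          have := congrFun hv i
          simp only [Pi.smul_apply, smul_eq_mul] at this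
          exact mul_right_cancel₀ hi this
        have : t = s := Units.ext hts
        subst this
        rfl
      · rintro ⟨x, hx0, hxne⟩
        obtain ⟨a, ha⟩ := Projectivization.exists_smul_eq_mk_rep F x hxne
        have hPred : MvPolynomial.eval (Projectivization.mk F x hxne).rep
            (fermatSlice F d e0 e1 e2) = 0 := by
          rw [← ha, Units.smul_def, hHom, hx0, mul_zero]
        refine ⟨⟨⟨Projectivization.mk F x hxne, hPred⟩, a⁻¹⟩, ?_⟩
        apply Subtype.ext
        show ((a⁻¹ : Fˣ) : F) • (Projectivization.mk F x hxne).rep = x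
        rw [← ha, Units.smul_def, smul_smul]
        norm_num
    have hcount : Nat.card {x : Fin 3 → F //
        MvPolynomial.eval x (fermatSlice F d e0 e1 e2) = 0 ∧ x ≠ 0} =
        Nat.card PS * Nat.card Fˣ := by
      rw [← Nat.card_prod]
      exact (Nat.card_eq_of_bijective φ hbij).symm
    have hsub : Nat.card {x : Fin 3 → F //
        MvPolynomial.eval x (fermatSlice F d e0 e1 e2) = 0 ∧ x ≠ 0} =
        (Finset.univ.filter (fun x : Fin 3 → F =>
          MvPolynomial.eval x (fermatSlice F d e0 e1 e2) = 0 ∧ x ≠ 0)).card := by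
      rw [Nat.card_eq_fintype_card, Fintype.card_subtype]
    have hunits : Nat.card Fˣ = Fintype.card F - 1 := by
      rw [Nat.card_eq_fintype_card, Fintype.card_units]
    rw [← hsub, hcount, hunits]
    have hc1 : 1 ≤ Fintype.card F := Fintype.card_pos
    push_cast [Nat.cast_sub hc1]
    ring
  -- split off the zero vector
  have hsplit : (T.card : ℤ) = ((Finset.univ.filter (fun x : Fin 3 → F =>
      MvPolynomial.eval x (fermatSlice F d e0 e1 e2) = 0 ∧ x ≠ 0)).card : ℤ) + 1 := by
    have hfe : Finset.univ.filter (fun x : Fin 3 → F =>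
        MvPolynomial.eval x (fermatSlice F d e0 e1 e2) = 0 ∧ x ≠ 0) = T.erase 0 := by
      ext x
      simp only [Finset.mem_filter, Finset.mem_univ, true_and, Finset.mem_erase, hT]
      tauto
    rw [hfe, Finset.card_erase_of_mem h0T]
    have : 1 ≤ T.card := Finset.card_pos.mpr ⟨0, h0T⟩
    push_cast [Nat.cast_sub this]
    ring
  -- final assembly
  have big : 16 * (T.card : ℤ) = 6 * (Fintype.card F : ℤ) ^ 3
      - 18 * (Fintype.card F : ℤ) ^ 2 + 58 * (Fintype.card F : ℤ) - 30 := by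
    rw [← hsum2, hsum1, hval]
  have hq2 : (2 : ℤ) ≤ (Fintype.card F : ℤ) := by
    have := Fintype.one_lt_card (α := F)
    exact_mod_cast this
  have hq1 : ((Fintype.card F : ℤ) - 1) ≠ 0 := by omega
  have key : ((Fintype.card F : ℤ) - 1) * (16 * (Nat.card {x : Projectivization F (Fin 3 → F) //
      MvPolynomial.eval x.rep (fermatSlice F d e0 e1 e2) = 0} : ℤ)) =
      ((Fintype.card F : ℤ) - 1) * (6 * (Fintype.card F : ℤ) ^ 2
        - 12 * (Fintype.card F : ℤ) + 46) := by
    linear_combination big - 16 * hsplit - 16 * hNcard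
  have h16 := mul_left_cancel₀ hq1 key
  have hq : ((p ^ h : ℕ) : ℤ) = (Fintype.card F : ℤ) := by rw [hcard]
  push_cast [← hq] at h16 ⊢
  linarith
end

section
/- Suppose d is even and η(e0) = η(e1) = η(e2) = 1. Then the number of points (x0 : x1 : x2) ∈ ℙ²(F_q) with C(x0, x1, x2) = 0 equals 3(q - 1)²/8; equivalently, writing n = (q-1)/2 = d, it equals n(n + q - 1)/2. -/
open MvPolynomial

section Aux
open Finset
variable {F : Type} [Field F] [Fintype F] [DecidableEq F]

local notation "χ" => (quadraticChar F ·)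
local notation "q" => (Fintype.card F : ℤ)

lemma chi_sq_ite (a : F) : (χ a)^2 = if a = 0 then 0 else 1 := by
  split_ifs with h
  · simp [h, quadraticChar_zero]
  · exact quadraticChar_sq_one h

lemma chi_pow4 (a : F) : (χ a)^4 = (χ a)^2 := by
  by_cases h : a = 0
  · simp [h, quadraticChar_zero]
  · rw [show (4:ℕ) = 2*2 by rfl, pow_mul, quadraticChar_sq_one h]; simp [quadraticChar_sq_one h]

lemma chi_cube (a : F) : (χ a)^3 = χ a := by
  by_cases h : a = 0
  · simp [h, quadraticChar_zero]
  · rw [pow_succ, quadraticChar_sq_one h, one_mul]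

lemma sum_chi (hF : ringChar F ≠ 2) : ∑ a : F, χ a = 0 := quadraticChar_sum_zero hF

lemma sum_chi_sq : ∑ a : F, (χ a)^2 = q - 1 := by
  have : ∀ a : F, (χ a)^2 = 1 - (if a = 0 then 1 else 0) := by
    intro a; rw [chi_sq_ite]; split_ifs <;> ring
  simp only [this]
  rw [Finset.sum_sub_distrib, Finset.sum_const, Finset.sum_ite_eq' univ (0:F) (fun _ => (1:ℤ))]
  simp [Finset.card_univ]

lemma sum_chi_shift (hF : ringChar F ≠ 2) (t : F) : ∑ a : F, χ (a + t) = 0 := by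
  rw [Fintype.sum_equiv (Equiv.addRight t) (fun a => χ (a + t)) (fun a => χ a)]
  · exact sum_chi hF
  · intro x; rfl

lemma sum_chi_sq' : ∑ a : F, (quadraticChar F a)^2 = q - 1 := by
  have h : ∀ a : F, (χ a)^2 = 1 - (if a = 0 then 1 else 0) := by
    intro a; by_cases h : a = 0
    · simp [h, quadraticChar_zero]
    · rw [quadraticChar_sq_one h]; simp [h]
  simp only [h]
  rw [Finset.sum_sub_distrib, Finset.sum_const, Finset.sum_ite_eq' univ (0:F) (fun _ => (1:ℤ))]
  simp [Finset.card_univ]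

lemma sum_chi_chi_add (hF : ringChar F ≠ 2) (w : F) :
    ∑ x : F, quadraticChar F x * quadraticChar F (x + w) = (if w = 0 then q else 0) - 1 := by
  by_cases hw : w = 0
  · subst hw
    simp only [add_zero, if_true, ← sq]
    exact sum_chi_sq'
  · rw [if_neg hw]
    have h0 : ∑ x : F, χ x * χ (x + w) = ∑ x ∈ univ.erase (0:F), χ x * χ (x + w) :=
      (Finset.sum_erase _ (by simp [quadraticChar_zero])).symm
    rw [h0]
    have h1 : ∑ x ∈ univ.erase (0:F), χ x * χ (x + w)
        = ∑ u ∈ univ.erase (1:F), χ u := by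
      apply Finset.sum_nbij' (i := fun x => 1 + w * x⁻¹) (j := fun u => w * (u - 1)⁻¹)
      · intro a ha
        simp only [mem_erase, mem_univ, and_true] at ha ⊢
        intro hc
        have : w * a⁻¹ = 0 := by linear_combination hc
        rcases mul_eq_zero.1 this with h | h
        · exact hw h
        · exact ha (by simpa using h)
      · intro u hu
        simp only [mem_erase, mem_univ, and_true] at hu ⊢
        exact mul_ne_zero hw (inv_ne_zero (sub_ne_zero.2 hu))
      · intro a ha
        simp only [mem_erase, mem_univ, and_true] at ha
        field_simp
        simp [hw]
      · intro u hu
        simp only [mem_erase, mem_univ, and_true] at hu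
        have : u - 1 ≠ 0 := sub_ne_zero.2 hu
        field_simp
        ring
      · intro a ha
        simp only [mem_erase, mem_univ, and_true] at ha
        have key : a * (a + w) = a^2 * (1 + w * a⁻¹) := by field_simp
        rw [← map_mul, key, map_mul, quadraticChar_sq_one' ha, one_mul]
    rw [h1, Finset.sum_erase_eq_sub (mem_univ (1:F)), quadraticChar_sum_zero hF]
    simp

lemma chi_neg (hm1 : quadraticChar F (-1) = 1) (a : F) :
    quadraticChar F (-a) = quadraticChar F a := by
  rw [show (-a : F) = -1 * a by ring, map_mul, hm1, one_mul]

lemma sum_ite_chi (c : F) (A : ℤ) : ∑ x : F, (if x = c then quadraticChar F x * A else 0)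
    = quadraticChar F c * A := by
  simpa using Finset.sum_ite_eq' univ c (fun x => quadraticChar F x * A)

lemma sum_sq_sq (w : F) : ∑ x : F, (quadraticChar F x)^2 * (quadraticChar F (x+w))^2
    = (q - 2) + (if w = 0 then 1 else 0) := by
  by_cases hw : w = 0
  · subst hw
    simp only [add_zero, if_true, ← pow_add]
    have : ∀ x : F, (χ x)^(2+2) = (χ x)^2 := chi_pow4
    simp only [this, sum_chi_sq]; ring
  · rw [if_neg hw]
    have h : ∀ x : F, (χ x)^2 * (χ (x+w))^2
        = 1 - (if x = 0 then 1 else 0) - (if x = -w then 1 else 0) := by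
      intro x
      by_cases h0 : x = 0
      · subst h0; rw [chi_sq_ite]
        simp [hw, Ne.symm (neg_ne_zero.2 hw)]
      · by_cases h1 : x = -w
        · subst h1; rw [chi_sq_ite, chi_sq_ite]
          simp [h0]
        · rw [chi_sq_ite, chi_sq_ite]
          have : x + w ≠ 0 := fun hc => h1 (by linear_combination hc)
          simp [h0, h1, this]
    simp only [h]
    rw [Finset.sum_sub_distrib, Finset.sum_sub_distrib, Finset.sum_const,
      Finset.sum_ite_eq' univ (0:F) (fun _ => (1:ℤ)),
      Finset.sum_ite_eq' univ (-w:F) (fun _ => (1:ℤ))]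
    simp [Finset.card_univ]; ring

lemma sum_chi_mul_sq_add (hF : ringChar F ≠ 2) (hm1 : quadraticChar F (-1) = 1) (w : F) :
    ∑ x : F, quadraticChar F x * (quadraticChar F (x+w))^2 = -(quadraticChar F w) := by
  have h : ∀ x : F, χ x * (χ (x+w))^2 = χ x - (if x = -w then χ x * 1 else 0) := by
    intro x
    by_cases h1 : x = -w
    · subst h1; simp [quadraticChar_zero]
    · have : x + w ≠ 0 := fun hc => h1 (by linear_combination hc)
      rw [quadraticChar_sq_one this]; simp [h1]
  simp only [h]
  rw [Finset.sum_sub_distrib, quadraticChar_sum_zero hF, sum_ite_chi, chi_neg hm1]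
  ring

lemma sum_sq_mul_chi_add (hF : ringChar F ≠ 2) (w : F) :
    ∑ x : F, (quadraticChar F x)^2 * quadraticChar F (x+w) = -(quadraticChar F w) := by
  have h : ∀ x : F, (χ x)^2 * χ (x+w) = χ (x+w) - (if x = 0 then χ w * 1 else 0) := by
    intro x
    by_cases h0 : x = 0
    · subst h0; simp [quadraticChar_zero]
    · rw [quadraticChar_sq_one h0]; simp [h0]
  simp only [h]
  rw [Finset.sum_sub_distrib, sum_chi_shift hF]
  have := Finset.sum_ite_eq' univ (0:F) (fun _ => quadraticChar F w * 1)
  simp only [mem_univ, if_true] at this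
  rw [this]; ring

lemma sum_chi_linear (hF : ringChar F ≠ 2) (c : F) (A B : ℤ) :
    ∑ y : F, quadraticChar F y * (if y = c then A else B) = quadraticChar F c * (A - B) := by
  have h : ∀ y : F, quadraticChar F y * (if y = c then A else B)
      = quadraticChar F y * B + (if y = c then quadraticChar F y * (A - B) else 0) := by
    intro y; by_cases h : y = c
    · simp only [h, if_pos rfl, if_true]; ring
    · simp only [if_neg h]; ring
  simp only [h]
  rw [Finset.sum_add_distrib, ← Finset.sum_mul, quadraticChar_sum_zero hF, sum_ite_chi]
  ring

lemma sum_sq_linear (c : F) (A B : ℤ) :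
    ∑ y : F, (quadraticChar F y)^2 * (if y = c then A else B)
      = (q - 1) * B + (quadraticChar F c)^2 * (A - B) := by
  have h : ∀ y : F, (quadraticChar F y)^2 * (if y = c then A else B)
      = (quadraticChar F y)^2 * B + (if y = c then (quadraticChar F y)^2 * (A - B) else 0) := by
    intro y; by_cases h : y = c
    · simp only [h, if_pos rfl, if_true]; ring
    · simp only [if_neg h]; ring
  simp only [h]
  rw [Finset.sum_add_distrib, ← Finset.sum_mul, sum_chi_sq',
    Finset.sum_ite_eq' univ c (fun y => (quadraticChar F y)^2 * (A - B))]
  simp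

lemma chi_sq_neg (a : F) : (quadraticChar F (-a))^2 = (quadraticChar F a)^2 := by
  rw [chi_sq_ite, chi_sq_ite]; simp [neg_eq_zero]

lemma sumA1 (hF : ringChar F ≠ 2) (hm1 : quadraticChar F (-1) = 1) :
    ∑ x : F, ∑ y : F, ∑ z : F, (quadraticChar F x * quadraticChar F y *
      (quadraticChar F z)^2 * (quadraticChar F (x+y+z))^2) = q - 1 := by
  have inner : ∀ x y : F, ∑ z : F, (quadraticChar F x * quadraticChar F y *
      (quadraticChar F z)^2 * (quadraticChar F (x+y+z))^2)
      = quadraticChar F x * (quadraticChar F y * (if y = -x then q-1 else q-2)) := by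
    intro x y
    have hz : ∀ z : F, quadraticChar F x * quadraticChar F y *
        (quadraticChar F z)^2 * (quadraticChar F (x+y+z))^2
        = quadraticChar F x * quadraticChar F y *
          ((quadraticChar F z)^2 * (quadraticChar F (z+(x+y)))^2) := by
      intro z; rw [show x+y+z = z+(x+y) by ring]; ring
    rw [Finset.sum_congr rfl (fun z _ => hz z), ← Finset.mul_sum, sum_sq_sq]
    by_cases hc : y = -x
    · rw [if_pos hc, if_pos (by rw [hc]; ring)]; ring
    · rw [if_neg (fun hc2 => hc (by linear_combination hc2)), if_neg hc]; ring
  simp only [inner]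
  have mid : ∀ x : F, ∑ y : F, quadraticChar F x *
      (quadraticChar F y * (if y = -x then q-1 else q-2))
      = quadraticChar F x * quadraticChar F x := by
    intro x
    rw [← Finset.mul_sum, sum_chi_linear hF (-x) (q-1) (q-2), chi_neg hm1]
    ring
  simp only [mid, ← sq]
  exact sum_chi_sq'

lemma sumA2 (hF : ringChar F ≠ 2) (hm1 : quadraticChar F (-1) = 1) :
    ∑ x : F, ∑ y : F, ∑ z : F, (quadraticChar F x * quadraticChar F z *
      (quadraticChar F y)^2 * (quadraticChar F (x+y+z))^2) = q - 1 := by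
  have inner : ∀ x y : F, ∑ z : F, (quadraticChar F x * quadraticChar F z *
      (quadraticChar F y)^2 * (quadraticChar F (x+y+z))^2)
      = quadraticChar F x * (quadraticChar F y)^2 * -(quadraticChar F (x+y)) := by
    intro x y
    have hz : ∀ z : F, quadraticChar F x * quadraticChar F z *
        (quadraticChar F y)^2 * (quadraticChar F (x+y+z))^2
        = quadraticChar F x * (quadraticChar F y)^2 *
          (quadraticChar F z * (quadraticChar F (z+(x+y)))^2) := by
      intro z; rw [show x+y+z = z+(x+y) by ring]; ring
    rw [Finset.sum_congr rfl (fun z _ => hz z), ← Finset.mul_sum,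
      sum_chi_mul_sq_add hF hm1]
  simp only [inner]
  have mid : ∀ x : F, ∑ y : F, quadraticChar F x * (quadraticChar F y)^2 *
      -(quadraticChar F (x+y))
      = quadraticChar F x * quadraticChar F x := by
    intro x
    have hy : ∀ y : F, quadraticChar F x * (quadraticChar F y)^2 * -(quadraticChar F (x+y))
        = -(quadraticChar F x) * ((quadraticChar F y)^2 * quadraticChar F (y+x)) := by
      intro y; rw [show x+y = y+x by ring]; ring
    rw [Finset.sum_congr rfl (fun y _ => hy y), ← Finset.mul_sum, sum_sq_mul_chi_add hF]
    ring
  simp only [mid, ← sq]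
  exact sum_chi_sq'

lemma sumA3 (hF : ringChar F ≠ 2) (hm1 : quadraticChar F (-1) = 1) :
    ∑ x : F, ∑ y : F, ∑ z : F, (quadraticChar F y * quadraticChar F z *
      (quadraticChar F x)^2 * (quadraticChar F (x+y+z))^2) = q - 1 := by
  have inner : ∀ x y : F, ∑ z : F, (quadraticChar F y * quadraticChar F z *
      (quadraticChar F x)^2 * (quadraticChar F (x+y+z))^2)
      = (quadraticChar F x)^2 * quadraticChar F y * -(quadraticChar F (x+y)) := by
    intro x y
    have hz : ∀ z : F, quadraticChar F y * quadraticChar F z *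
        (quadraticChar F x)^2 * (quadraticChar F (x+y+z))^2
        = (quadraticChar F x)^2 * quadraticChar F y *
          (quadraticChar F z * (quadraticChar F (z+(x+y)))^2) := by
      intro z; rw [show x+y+z = z+(x+y) by ring]; ring
    rw [Finset.sum_congr rfl (fun z _ => hz z), ← Finset.mul_sum,
      sum_chi_mul_sq_add hF hm1]
  simp only [inner]
  have mid : ∀ x : F, ∑ y : F, (quadraticChar F x)^2 * quadraticChar F y *
      -(quadraticChar F (x+y))
      = (quadraticChar F x)^2 := by
    intro x
    have hy : ∀ y : F, (quadraticChar F x)^2 * quadraticChar F y * -(quadraticChar F (x+y))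
        = -(quadraticChar F x)^2 * (quadraticChar F y * quadraticChar F (y+x)) := by
      intro y; rw [show x+y = y+x by ring]; ring
    rw [Finset.sum_congr rfl (fun y _ => hy y), ← Finset.mul_sum, sum_chi_chi_add hF]
    by_cases hx : x = 0
    · simp [hx, quadraticChar_zero]
    · rw [if_neg hx]; ring
  simp only [mid]
  exact sum_chi_sq'

lemma sumB1 (hF : ringChar F ≠ 2) :
    ∑ x : F, ∑ y : F, ∑ z : F, (quadraticChar F x * (quadraticChar F y)^2 *
      (quadraticChar F z)^2 * quadraticChar F (x+y+z)) = q - 1 := by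
  have inner : ∀ x y : F, ∑ z : F, (quadraticChar F x * (quadraticChar F y)^2 *
      (quadraticChar F z)^2 * quadraticChar F (x+y+z))
      = quadraticChar F x * (quadraticChar F y)^2 * -(quadraticChar F (x+y)) := by
    intro x y
    have hz : ∀ z : F, quadraticChar F x * (quadraticChar F y)^2 *
        (quadraticChar F z)^2 * quadraticChar F (x+y+z)
        = quadraticChar F x * (quadraticChar F y)^2 *
          ((quadraticChar F z)^2 * quadraticChar F (z+(x+y))) := by
      intro z; rw [show x+y+z = z+(x+y) by ring]; ring
    rw [Finset.sum_congr rfl (fun z _ => hz z), ← Finset.mul_sum, sum_sq_mul_chi_add hF]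
  simp only [inner]
  have mid : ∀ x : F, ∑ y : F, quadraticChar F x * (quadraticChar F y)^2 *
      -(quadraticChar F (x+y))
      = quadraticChar F x * quadraticChar F x := by
    intro x
    have hy : ∀ y : F, quadraticChar F x * (quadraticChar F y)^2 * -(quadraticChar F (x+y))
        = -(quadraticChar F x) * ((quadraticChar F y)^2 * quadraticChar F (y+x)) := by
      intro y; rw [show x+y = y+x by ring]; ring
    rw [Finset.sum_congr rfl (fun y _ => hy y), ← Finset.mul_sum, sum_sq_mul_chi_add hF]
    ring
  simp only [mid, ← sq]
  exact sum_chi_sq'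

lemma sumB2 (hF : ringChar F ≠ 2) :
    ∑ x : F, ∑ y : F, ∑ z : F, (quadraticChar F y * (quadraticChar F x)^2 *
      (quadraticChar F z)^2 * quadraticChar F (x+y+z)) = q - 1 := by
  have inner : ∀ x y : F, ∑ z : F, (quadraticChar F y * (quadraticChar F x)^2 *
      (quadraticChar F z)^2 * quadraticChar F (x+y+z))
      = (quadraticChar F x)^2 * quadraticChar F y * -(quadraticChar F (x+y)) := by
    intro x y
    have hz : ∀ z : F, quadraticChar F y * (quadraticChar F x)^2 *
        (quadraticChar F z)^2 * quadraticChar F (x+y+z)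
        = (quadraticChar F x)^2 * quadraticChar F y *
          ((quadraticChar F z)^2 * quadraticChar F (z+(x+y))) := by
      intro z; rw [show x+y+z = z+(x+y) by ring]; ring
    rw [Finset.sum_congr rfl (fun z _ => hz z), ← Finset.mul_sum, sum_sq_mul_chi_add hF]
  simp only [inner]
  have mid : ∀ x : F, ∑ y : F, (quadraticChar F x)^2 * quadraticChar F y *
      -(quadraticChar F (x+y))
      = (quadraticChar F x)^2 := by
    intro x
    have hy : ∀ y : F, (quadraticChar F x)^2 * quadraticChar F y * -(quadraticChar F (x+y))
        = -(quadraticChar F x)^2 * (quadraticChar F y * quadraticChar F (y+x)) := by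
      intro y; rw [show x+y = y+x by ring]; ring
    rw [Finset.sum_congr rfl (fun y _ => hy y), ← Finset.mul_sum, sum_chi_chi_add hF]
    by_cases hx : x = 0
    · simp [hx, quadraticChar_zero]
    · rw [if_neg hx]; ring
  simp only [mid]
  exact sum_chi_sq'

lemma sumB3 (hF : ringChar F ≠ 2) (hm1 : quadraticChar F (-1) = 1) :
    ∑ x : F, ∑ y : F, ∑ z : F, (quadraticChar F z * (quadraticChar F x)^2 *
      (quadraticChar F y)^2 * quadraticChar F (x+y+z)) = q - 1 := by
  have inner : ∀ x y : F, ∑ z : F, (quadraticChar F z * (quadraticChar F x)^2 *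
      (quadraticChar F y)^2 * quadraticChar F (x+y+z))
      = (quadraticChar F x)^2 * ((quadraticChar F y)^2 *
        (if y = -x then q-1 else -1)) := by
    intro x y
    have hz : ∀ z : F, quadraticChar F z * (quadraticChar F x)^2 *
        (quadraticChar F y)^2 * quadraticChar F (x+y+z)
        = (quadraticChar F x)^2 * (quadraticChar F y)^2 *
          (quadraticChar F z * quadraticChar F (z+(x+y))) := by
      intro z; rw [show x+y+z = z+(x+y) by ring]; ring
    rw [Finset.sum_congr rfl (fun z _ => hz z), ← Finset.mul_sum, sum_chi_chi_add hF]
    by_cases hc : y = -x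
    · rw [if_pos hc, if_pos (by rw [hc]; ring)]; ring
    · rw [if_neg (fun hc2 => hc (by linear_combination hc2)), if_neg hc]; ring
  simp only [inner]
  have mid : ∀ x : F, ∑ y : F, (quadraticChar F x)^2 * ((quadraticChar F y)^2 *
      (if y = -x then q-1 else -1))
      = (quadraticChar F x)^2 := by
    intro x
    rw [← Finset.mul_sum, sum_sq_linear (-x) (q-1) (-1), chi_sq_neg]
    by_cases hx : x = 0
    · simp [hx, quadraticChar_zero]
    · rw [chi_sq_ite, if_neg hx]; ring
  simp only [mid]
  exact sum_chi_sq'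

lemma sumT (hF : ringChar F ≠ 2) (hm1 : quadraticChar F (-1) = 1) :
    ∑ x : F, ∑ y : F, ∑ z : F, (quadraticChar F x * quadraticChar F y *
      quadraticChar F z * quadraticChar F (x+y+z)) = q * (q - 1) := by
  have inner : ∀ x y : F, ∑ z : F, (quadraticChar F x * quadraticChar F y *
      quadraticChar F z * quadraticChar F (x+y+z))
      = quadraticChar F x * (quadraticChar F y * (if y = -x then q-1 else -1)) := by
    intro x y
    have hz : ∀ z : F, quadraticChar F x * quadraticChar F y *
        quadraticChar F z * quadraticChar F (x+y+z)
        = quadraticChar F x * quadraticChar F y *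
          (quadraticChar F z * quadraticChar F (z+(x+y))) := by
      intro z; rw [show x+y+z = z+(x+y) by ring]; ring
    rw [Finset.sum_congr rfl (fun z _ => hz z), ← Finset.mul_sum, sum_chi_chi_add hF]
    by_cases hc : y = -x
    · rw [if_pos hc, if_pos (by rw [hc]; ring)]; ring
    · rw [if_neg (fun hc2 => hc (by linear_combination hc2)), if_neg hc]; ring
  simp only [inner]
  have mid : ∀ x : F, ∑ y : F, quadraticChar F x *
      (quadraticChar F y * (if y = -x then q-1 else -1))
      = q * (quadraticChar F x * quadraticChar F x) := by
    intro x
    rw [← Finset.mul_sum, sum_chi_linear hF (-x) (q-1) (-1), chi_neg hm1]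
    ring
  simp only [mid, ← sq]
  rw [← Finset.mul_sum, sum_chi_sq']

lemma sumE (hm1 : quadraticChar F (-1) = 1) :
    ∑ x : F, ∑ y : F, ∑ z : F, ((quadraticChar F x)^2 * (quadraticChar F y)^2 *
      (quadraticChar F z)^2 * (quadraticChar F (x+y+z))^2)
      = (q - 1) * ((q - 1) * (q - 2) + 1) := by
  have inner : ∀ x y : F, ∑ z : F, ((quadraticChar F x)^2 * (quadraticChar F y)^2 *
      (quadraticChar F z)^2 * (quadraticChar F (x+y+z))^2)
      = (quadraticChar F x)^2 * ((quadraticChar F y)^2 *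
        (if y = -x then q-1 else q-2)) := by
    intro x y
    have hz : ∀ z : F, (quadraticChar F x)^2 * (quadraticChar F y)^2 *
        (quadraticChar F z)^2 * (quadraticChar F (x+y+z))^2
        = (quadraticChar F x)^2 * (quadraticChar F y)^2 *
          ((quadraticChar F z)^2 * (quadraticChar F (z+(x+y)))^2) := by
      intro z; rw [show x+y+z = z+(x+y) by ring]; ring
    rw [Finset.sum_congr rfl (fun z _ => hz z), ← Finset.mul_sum, sum_sq_sq]
    by_cases hc : y = -x
    · rw [if_pos hc, if_pos (by rw [hc]; ring)]; ring
    · rw [if_neg (fun hc2 => hc (by linear_combination hc2)), if_neg hc]; ring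
  simp only [inner]
  have mid : ∀ x : F, ∑ y : F, (quadraticChar F x)^2 * ((quadraticChar F y)^2 *
      (if y = -x then q-1 else q-2))
      = (quadraticChar F x)^2 * ((q - 1) * (q - 2) + 1) := by
    intro x
    rw [← Finset.mul_sum, sum_sq_linear (-x) (q-1) (q-2), chi_sq_neg]
    by_cases hx : x = 0
    · simp [hx, quadraticChar_zero]
    · rw [chi_sq_ite, if_neg hx]; ring
  simp only [mid]
  rw [← Finset.sum_mul, sum_chi_sq']

lemma nonvanish (hm1 : quadraticChar F (-1) = 1) {x y z : F}
    (hne : ¬(x = 0 ∧ y = 0 ∧ z = 0))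
    (hsum : quadraticChar F x + quadraticChar F y + quadraticChar F z
      + quadraticChar F (x+y+z) = 0) :
    x ≠ 0 ∧ y ≠ 0 ∧ z ≠ 0 ∧ x+y+z ≠ 0 := by
  by_cases hx : x = 0 <;> by_cases hy : y = 0 <;> by_cases hz : z = 0
  · exact absurd ⟨hx, hy, hz⟩ hne
  · -- x=0, y=0, z≠0
    exfalso; subst hx; subst hy
    simp only [zero_add, quadraticChar_zero] at hsum
    rcases quadraticChar_dichotomy hz with h|h <;> rw [h] at hsum <;> norm_num at hsum
  · exfalso; subst hx; subst hz
    simp only [zero_add, add_zero, quadraticChar_zero] at hsum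
    rcases quadraticChar_dichotomy hy with h|h <;> rw [h] at hsum <;> norm_num at hsum
  · -- x = 0, y,z ≠ 0
    exfalso; subst hx
    simp only [zero_add, quadraticChar_zero] at hsum
    by_cases hs : y + z = 0
    · have hzy : z = -y := by linear_combination hs
      rw [hs, quadraticChar_zero, hzy, chi_neg hm1] at hsum
      rcases quadraticChar_dichotomy hy with h|h <;> rw [h] at hsum <;> norm_num at hsum
    · rcases quadraticChar_dichotomy hy with h1|h1 <;> rcases quadraticChar_dichotomy hz with h2|h2 <;>
        rcases quadraticChar_dichotomy hs with h3|h3 <;> rw [h1, h2, h3] at hsum <;> norm_num at hsum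
  · exfalso; subst hy; subst hz
    simp only [add_zero, quadraticChar_zero] at hsum
    rcases quadraticChar_dichotomy hx with h|h <;> rw [h] at hsum <;> norm_num at hsum
  · -- y = 0, x,z ≠ 0
    exfalso; subst hy
    simp only [add_zero, quadraticChar_zero] at hsum
    by_cases hs : x + z = 0
    · have hzy : z = -x := by linear_combination hs
      rw [hs, quadraticChar_zero, hzy, chi_neg hm1] at hsum
      rcases quadraticChar_dichotomy hx with h|h <;> rw [h] at hsum <;> norm_num at hsum
    · rcases quadraticChar_dichotomy hx with h1|h1 <;> rcases quadraticChar_dichotomy hz with h2|h2 <;>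
        rcases quadraticChar_dichotomy hs with h3|h3 <;> rw [h1, h2, h3] at hsum <;> norm_num at hsum
  · -- z = 0, x,y ≠ 0
    exfalso; subst hz
    simp only [add_zero, quadraticChar_zero] at hsum
    by_cases hs : x + y = 0
    · have hzy : y = -x := by linear_combination hs
      rw [hs, quadraticChar_zero, hzy, chi_neg hm1] at hsum
      rcases quadraticChar_dichotomy hx with h|h <;> rw [h] at hsum <;> norm_num at hsum
    · rcases quadraticChar_dichotomy hx with h1|h1 <;> rcases quadraticChar_dichotomy hy with h2|h2 <;>
        rcases quadraticChar_dichotomy hs with h3|h3 <;> rw [h1, h2, h3] at hsum <;> norm_num at hsum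
  · -- all nonzero
    refine ⟨hx, hy, hz, ?_⟩
    intro hs
    rw [hs, quadraticChar_zero] at hsum
    rcases quadraticChar_dichotomy hx with h1|h1 <;> rcases quadraticChar_dichotomy hy with h2|h2 <;>
      rcases quadraticChar_dichotomy hz with h3|h3 <;> rw [h1, h2, h3] at hsum <;> norm_num at hsum

lemma pointwise_id (hm1 : quadraticChar F (-1) = 1) {d : ℕ}
    (hpow : ∀ a : F, a ^ d = ((quadraticChar F a : ℤ) : F))
    (hinj : ∀ m : ℤ, m.natAbs ≤ 4 → (m : F) = 0 → m = 0)
    (x y z : F) :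
    (if (¬(x = 0 ∧ y = 0 ∧ z = 0) ∧ x^d + y^d + z^d + (x+y+z)^d = 0) then (64:ℤ) else 0)
    = 24 * ((quadraticChar F x)^2*(quadraticChar F y)^2*(quadraticChar F z)^2*(quadraticChar F (x+y+z))^2)
    - 8 * (quadraticChar F x * quadraticChar F y * (quadraticChar F z)^2 * (quadraticChar F (x+y+z))^2)
    - 8 * (quadraticChar F x * quadraticChar F z * (quadraticChar F y)^2 * (quadraticChar F (x+y+z))^2)
    - 8 * (quadraticChar F y * quadraticChar F z * (quadraticChar F x)^2 * (quadraticChar F (x+y+z))^2)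
    - 8 * (quadraticChar F x * (quadraticChar F y)^2 * (quadraticChar F z)^2 * quadraticChar F (x+y+z))
    - 8 * (quadraticChar F y * (quadraticChar F x)^2 * (quadraticChar F z)^2 * quadraticChar F (x+y+z))
    - 8 * (quadraticChar F z * (quadraticChar F x)^2 * (quadraticChar F y)^2 * quadraticChar F (x+y+z))
    + 24 * (quadraticChar F x * quadraticChar F y * quadraticChar F z * quadraticChar F (x+y+z)) := by
  have key : (x^d + y^d + z^d + (x+y+z)^d = 0) ↔
      (quadraticChar F x + quadraticChar F y + quadraticChar F z
        + quadraticChar F (x+y+z) = 0) := by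
    rw [hpow x, hpow y, hpow z, hpow (x+y+z)]
    constructor
    · intro hF0
      apply hinj _ _ (by push_cast at hF0 ⊢; linear_combination hF0)
      have h1 : ∀ u : F, (quadraticChar F u).natAbs ≤ 1 := by
        intro u
        rcases (quadraticChar_isQuadratic F) u with h|h|h <;> rw [h] <;> simp
      calc (quadraticChar F x + quadraticChar F y + quadraticChar F z
            + quadraticChar F (x+y+z)).natAbs
          ≤ _ := Int.natAbs_add_le _ _
        _ ≤ 4 := by
            have := Int.natAbs_add_le (quadraticChar F x + quadraticChar F y) (quadraticChar F z)
            have := Int.natAbs_add_le (quadraticChar F x) (quadraticChar F y)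
            have := h1 x; have := h1 y; have := h1 z; have := h1 (x+y+z)
            omega
    · intro hZ
      push_cast
      rw [show ((quadraticChar F x : ℤ) : F) + ((quadraticChar F y : ℤ) : F)
          + ((quadraticChar F z : ℤ) : F) + ((quadraticChar F (x+y+z) : ℤ) : F)
          = (((quadraticChar F x + quadraticChar F y + quadraticChar F z
            + quadraticChar F (x+y+z) : ℤ)) : F) by push_cast; ring, hZ]
      simp
  rw [if_congr (and_congr_right (fun _ => key)) rfl rfl]
  split_ifs with hC
  · obtain ⟨hne, hsum⟩ := hC
    obtain ⟨hx, hy, hz, hs⟩ := nonvanish hm1 hne hsum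
    rcases quadraticChar_dichotomy hx with h1|h1 <;>
      rcases quadraticChar_dichotomy hy with h2|h2 <;>
      rcases quadraticChar_dichotomy hz with h3|h3 <;>
      rcases quadraticChar_dichotomy hs with h4|h4 <;>
      rw [h1, h2, h3, h4] at hsum ⊢ <;> revert hsum <;> norm_num
  · by_cases hx : x = 0
    · subst hx; simp only [quadraticChar_zero]; ring
    · by_cases hy : y = 0
      · subst hy; simp only [quadraticChar_zero]; ring
      · by_cases hz : z = 0
        · subst hz; simp only [quadraticChar_zero]; ring
        · by_cases hs : x + y + z = 0
          · rw [hs, quadraticChar_zero]; ring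
          · have hsum : quadraticChar F x + quadraticChar F y + quadraticChar F z
                + quadraticChar F (x+y+z) ≠ 0 := by
              intro hc; exact hC ⟨fun ⟨a,_,_⟩ => hx a, hc⟩
            rcases quadraticChar_dichotomy hx with h1|h1 <;>
              rcases quadraticChar_dichotomy hy with h2|h2 <;>
              rcases quadraticChar_dichotomy hz with h3|h3 <;>
              rcases quadraticChar_dichotomy hs with h4|h4 <;>
              rw [h1, h2, h3, h4] at hsum ⊢ <;> revert hsum <;> norm_num

lemma count_triples (hF2 : ringChar F ≠ 2) (hm1 : quadraticChar F (-1) = 1) {d : ℕ}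
    (hpow : ∀ a : F, a ^ d = ((quadraticChar F a : ℤ) : F))
    (hinj : ∀ m : ℤ, m.natAbs ≤ 4 → (m : F) = 0 → m = 0) :
    (8 : ℤ) * ((univ.filter (fun t : F × F × F =>
      ¬(t.1 = 0 ∧ t.2.1 = 0 ∧ t.2.2 = 0) ∧
      t.1^d + t.2.1^d + t.2.2^d + (t.1+t.2.1+t.2.2)^d = 0)).card : ℤ)
    = 3 * (q-1)^3 := by
  have h64 : (64 : ℤ) * ((univ.filter (fun t : F × F × F =>
      ¬(t.1 = 0 ∧ t.2.1 = 0 ∧ t.2.2 = 0) ∧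
      t.1^d + t.2.1^d + t.2.2^d + (t.1+t.2.1+t.2.2)^d = 0)).card : ℤ)
      = ∑ t : F × F × F, (if (¬(t.1 = 0 ∧ t.2.1 = 0 ∧ t.2.2 = 0) ∧
        t.1^d + t.2.1^d + t.2.2^d + (t.1+t.2.1+t.2.2)^d = 0) then (64:ℤ) else 0) := by
    rw [← Finset.sum_filter, Finset.sum_const, nsmul_eq_mul]
    ring
  have hpt : ∀ x y z : F, (if (¬(x = 0 ∧ y = 0 ∧ z = 0) ∧
      x^d + y^d + z^d + (x+y+z)^d = 0) then (64:ℤ) else 0)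
      = 24 * ((quadraticChar F x)^2*(quadraticChar F y)^2*(quadraticChar F z)^2*(quadraticChar F (x+y+z))^2)
    - 8 * (quadraticChar F x * quadraticChar F y * (quadraticChar F z)^2 * (quadraticChar F (x+y+z))^2)
    - 8 * (quadraticChar F x * quadraticChar F z * (quadraticChar F y)^2 * (quadraticChar F (x+y+z))^2)
    - 8 * (quadraticChar F y * quadraticChar F z * (quadraticChar F x)^2 * (quadraticChar F (x+y+z))^2)
    - 8 * (quadraticChar F x * (quadraticChar F y)^2 * (quadraticChar F z)^2 * quadraticChar F (x+y+z))
    - 8 * (quadraticChar F y * (quadraticChar F x)^2 * (quadraticChar F z)^2 * quadraticChar F (x+y+z))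
    - 8 * (quadraticChar F z * (quadraticChar F x)^2 * (quadraticChar F y)^2 * quadraticChar F (x+y+z))
    + 24 * (quadraticChar F x * quadraticChar F y * quadraticChar F z * quadraticChar F (x+y+z)) :=
    pointwise_id hm1 hpow hinj
  have key : (64 : ℤ) * ((univ.filter (fun t : F × F × F =>
      ¬(t.1 = 0 ∧ t.2.1 = 0 ∧ t.2.2 = 0) ∧
      t.1^d + t.2.1^d + t.2.2^d + (t.1+t.2.1+t.2.2)^d = 0)).card : ℤ)
      = 24 * (q-1)^3 := by
    rw [h64]
    rw [Fintype.sum_prod_type]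
    simp only [Fintype.sum_prod_type]
    simp only [hpt]
    simp only [Finset.sum_add_distrib, Finset.sum_sub_distrib, ← Finset.mul_sum]
    rw [sumE hm1, sumA1 hF2 hm1, sumA2 hF2 hm1, sumA3 hF2 hm1, sumB1 hF2, sumB2 hF2,
      sumB3 hF2 hm1, sumT hF2 hm1]
    ring
  have h8 : (8:ℤ) * ((8:ℤ) * ((univ.filter (fun t : F × F × F =>
      ¬(t.1 = 0 ∧ t.2.1 = 0 ∧ t.2.2 = 0) ∧
      t.1^d + t.2.1^d + t.2.2^d + (t.1+t.2.1+t.2.2)^d = 0)).card : ℤ))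
      = 8 * (3 * (q-1)^3) := by linarith [key]
  exact mul_left_cancel₀ (by norm_num : (8:ℤ) ≠ 0) h8

end Aux


section Proj
open Projectivization

variable {K V : Type*} [Field K] [AddCommGroup V] [Module K V] [NoZeroSMulDivisors K V]

lemma unit_smul_cancel (a b : Kˣ) {r : V} (hr : r ≠ 0) (h : a • r = b • r) : a = b := by
  have h' : (a : K) • r = (b : K) • r := by
    simpa [Units.smul_def] using h
  have h2 : ((a : K) - (b : K)) • r = 0 := by rw [sub_smul, h', sub_self]
  rcases smul_eq_zero.1 h2 with h0 | h0
  · exact Units.ext (sub_eq_zero.mp h0)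
  · exact absurd h0 hr

noncomputable def projCountEquiv (P : V → Prop)
    (hP : ∀ (c : Kˣ) (v : V), P ((c : K) • v) ↔ P v) :
    {v : V // v ≠ 0 ∧ P v} ≃ {x : Projectivization K V // P x.rep} × Kˣ where
  toFun s :=
    (⟨Projectivization.mk K s.1 s.2.1, by
        have ha := (exists_smul_eq_mk_rep K s.1 s.2.1).choose_spec
        rw [← ha, Units.smul_def, hP]
        exact s.2.2⟩,
      ((exists_smul_eq_mk_rep K s.1 s.2.1).choose)⁻¹)
  invFun t := ⟨(t.2 : Kˣ) • t.1.1.rep, by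
      constructor
      · rw [Units.smul_def]
        exact smul_ne_zero (Units.ne_zero _) (rep_nonzero _)
      · rw [Units.smul_def, hP]
        exact t.1.2⟩
  left_inv s := by
    apply Subtype.ext
    have ha := (exists_smul_eq_mk_rep K s.1 s.2.1).choose_spec
    show (((exists_smul_eq_mk_rep K s.1 s.2.1).choose)⁻¹ : Kˣ) • (Projectivization.mk K s.1 s.2.1).rep = s.1
    have h2 : ((exists_smul_eq_mk_rep K s.1 s.2.1).choose)⁻¹ •
        ((exists_smul_eq_mk_rep K s.1 s.2.1).choose • s.1) = s.1 := inv_smul_smul _ _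
    rw [ha] at h2
    exact h2
  right_inv t := by
    have hv : ((t.2 : Kˣ) • t.1.1.rep : V) ≠ 0 := by
      rw [Units.smul_def]
      exact smul_ne_zero (Units.ne_zero _) (rep_nonzero _)
    have hmk : Projectivization.mk K ((t.2 : Kˣ) • t.1.1.rep) hv = t.1.1 := by
      conv_rhs => rw [← Projectivization.mk_rep t.1.1]
      rw [Projectivization.mk_eq_mk_iff]
      exact ⟨t.2, rfl⟩
    have ha := (exists_smul_eq_mk_rep K ((t.2 : Kˣ) • t.1.1.rep) hv).choose_spec
    apply Prod.ext
    · exact Subtype.ext hmk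
    · show ((exists_smul_eq_mk_rep K ((t.2 : Kˣ) • t.1.1.rep) hv).choose)⁻¹ = t.2
      set c := (exists_smul_eq_mk_rep K ((t.2 : Kˣ) • t.1.1.rep) hv).choose with hc
      rw [hmk] at ha
      have h1 : (c * t.2) • t.1.1.rep = (1 : Kˣ) • t.1.1.rep := by
        rw [mul_smul, one_smul]
        exact ha
      have h2 : c * t.2 = 1 := unit_smul_cancel _ _ (rep_nonzero _) h1
      rw [eq_inv_of_mul_eq_one_left h2, inv_inv]
  
lemma card_proj_mul (P : V → Prop)
    (hP : ∀ (c : Kˣ) (v : V), P ((c : K) • v) ↔ P v) :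
    Nat.card {v : V // v ≠ 0 ∧ P v}
      = Nat.card {x : Projectivization K V // P x.rep} * Nat.card Kˣ := by
  rw [← Nat.card_prod]
  exact Nat.card_congr (projCountEquiv P hP)

end Proj


/-- If `d` is even and `η(e0) = η(e1) = η(e2) = 1`, then the number of
points of `ℙ²(F_q)` on the curve `C = 0` equals `3(q - 1)²/8`
(i.e. `n(n + q - 1)/2` with `n = (q-1)/2 = d`). -/
theorem statement17 (p h : ℕ) (hp : Nat.Prime p) (hp3 : 3 < p) (hh : 0 < h)
    (F : Type) [Field F] [Fintype F] (hcard : Fintype.card F = p ^ h)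
    (d : ℕ) (hd : p ^ h = 2 * d + 1) (heven : Even d) (e0 e1 e2 : F)
    (h0 : e0 ^ d = 1) (h1 : e1 ^ d = 1) (h2 : e2 ^ d = 1) :
    (8 * Nat.card {x : Projectivization F (Fin 3 → F) //
        MvPolynomial.eval x.rep (fermatSlice F d e0 e1 e2) = 0} : ℤ) =
      3 * ((p ^ h : ℤ) - 1) ^ 2 := by
  classical
  have hp5 : 5 ≤ p := by
    have h4 : p ≠ 4 := by rintro rfl; norm_num at hp
    have := hp.two_le; omega
  have hqp : p ≤ p ^ h := Nat.le_self_pow hh.ne' p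
  have hq5 : 5 ≤ Fintype.card F := by rw [hcard]; omega
  have hd0 : d ≠ 0 := by
    have h5 : 5 ≤ p ^ h := by omega
    omega
  -- characteristic facts
  have hcharp : CharP F (ringChar F) := ringChar.charP F
  have hrprime : (ringChar F).Prime := CharP.char_is_prime F (ringChar F)
  have hrdvd : ringChar F ∣ p ^ h := by
    rw [← hcard]
    exact (CharP.cast_eq_zero_iff F (ringChar F) _).mp (FiniteField.cast_card_eq_zero F)
  have hrp : ringChar F = p :=
    (Nat.prime_dvd_prime_iff_eq hrprime hp).mp (hrprime.dvd_of_dvd_pow hrdvd)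
  have hF2 : ringChar F ≠ 2 := by rw [hrp]; omega
  have hm1 : quadraticChar F (-1) = 1 := by
    rw [quadraticChar_one_iff_isSquare (neg_ne_zero.mpr (one_ne_zero)),
      FiniteField.isSquare_neg_one_iff]
    obtain ⟨k, hk⟩ := heven
    rw [hcard, hd]
    omega
  have hd2 : Fintype.card F / 2 = d := by rw [hcard, hd]; omega
  have hpow : ∀ a : F, a ^ d = ((quadraticChar F a : ℤ) : F) := by
    intro a
    by_cases ha : a = 0
    · rw [ha, zero_pow hd0, quadraticChar_zero]; simp
    · have hq := quadraticCharFun_eq_pow_of_char_ne_two hF2 ha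
      rcases FiniteField.pow_dichotomy hF2 ha with hh1 | hh1
      · rw [← hd2, hh1, quadraticChar_apply, hq, if_pos hh1]; simp
      · have hne : a ^ (Fintype.card F / 2) ≠ 1 := by
          rw [hh1]; exact Ring.neg_one_ne_one_of_char_ne_two hF2
        rw [← hd2, hh1, quadraticChar_apply, hq, if_neg hne]; simp
  have hinj : ∀ m : ℤ, m.natAbs ≤ 4 → (m : F) = 0 → m = 0 := by
    intro m hm hm0
    have hdvd : (ringChar F : ℤ) ∣ m := (CharP.intCast_eq_zero_iff F (ringChar F) m).mp hm0
    have h2' : ringChar F ∣ m.natAbs := by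
      have := Int.natAbs_dvd_natAbs.mpr hdvd
      simpa using this
    by_cases hz : m.natAbs = 0
    · exact Int.natAbs_eq_zero.mp hz
    · have := Nat.le_of_dvd (Nat.pos_of_ne_zero hz) h2'
      rw [hrp] at this
      omega
  have heval : ∀ v : Fin 3 → F, eval v (fermatSlice F d e0 e1 e2)
      = v 0 ^ d + v 1 ^ d + v 2 ^ d + (e0 * v 0 + e1 * v 1 + e2 * v 2) ^ d := by
    intro v; simp [fermatSlice]
  have hP : ∀ (c : Fˣ) (v : Fin 3 → F),
      ((fun v => eval v (fermatSlice F d e0 e1 e2) = 0) ((c : F) • v)) ↔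
      ((fun v => eval v (fermatSlice F d e0 e1 e2) = 0) v) := by
    intro c v
    simp only
    have h1' : eval ((c : F) • v) (fermatSlice F d e0 e1 e2)
        = (c : F) ^ d * eval v (fermatSlice F d e0 e1 e2) := by
      rw [heval, heval]
      simp only [Pi.smul_apply, smul_eq_mul]
      rw [show (e0 * ((c:F) * v 0) + e1 * ((c:F) * v 1) + e2 * ((c:F) * v 2))
          = (c:F) * (e0 * v 0 + e1 * v 1 + e2 * v 2) by ring,
        mul_pow, mul_pow, mul_pow, mul_pow]
      ring
    rw [h1']
    constructor
    · intro hz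
      rcases mul_eq_zero.mp hz with hz | hz
      · exact absurd hz (pow_ne_zero _ (Units.ne_zero c))
      · exact hz
    · intro hz; rw [hz, mul_zero]
  have hcount := card_proj_mul (K := F) (V := Fin 3 → F)
    (fun v => eval v (fermatSlice F d e0 e1 e2) = 0) hP
  -- move to triples
  have he0 : e0 ≠ 0 := fun hz => by rw [hz, zero_pow hd0] at h0; exact zero_ne_one h0
  have he1 : e1 ≠ 0 := fun hz => by rw [hz, zero_pow hd0] at h1; exact zero_ne_one h1
  have he2 : e2 ≠ 0 := fun hz => by rw [hz, zero_pow hd0] at h2; exact zero_ne_one h2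
  let e3 : (Fin 3 → F) ≃ F × F × F :=
    { toFun := fun v => (v 0, v 1, v 2)
      invFun := fun t => ![t.1, t.2.1, t.2.2]
      left_inv := by intro v; funext i; fin_cases i <;> rfl
      right_inv := by intro t; rfl }
  have e4 : {v : Fin 3 → F // v ≠ 0 ∧ eval v (fermatSlice F d e0 e1 e2) = 0}
      ≃ {t : F × F × F // ¬(t.1 = 0 ∧ t.2.1 = 0 ∧ t.2.2 = 0) ∧
          t.1^d + t.2.1^d + t.2.2^d + (e0*t.1 + e1*t.2.1 + e2*t.2.2)^d = 0} := by
    apply Equiv.subtypeEquiv e3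
    intro v
    have hz : v = 0 ↔ (v 0 = 0 ∧ v 1 = 0 ∧ v 2 = 0) := by
      constructor
      · intro hv; rw [hv]; simp
      · rintro ⟨ha, hb, hc⟩; funext i; fin_cases i <;> simpa
    constructor
    · rintro ⟨hv, hPv⟩
      refine ⟨fun hc => hv (hz.mpr hc), ?_⟩
      rw [heval] at hPv
      exact hPv
    · rintro ⟨hv, hPv⟩
      refine ⟨fun hc => hv (hz.mp hc), ?_⟩
      rw [heval]
      exact hPv
  have e5 : {t : F × F × F // ¬(t.1 = 0 ∧ t.2.1 = 0 ∧ t.2.2 = 0) ∧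
          t.1^d + t.2.1^d + t.2.2^d + (e0*t.1 + e1*t.2.1 + e2*t.2.2)^d = 0}
      ≃ {t : F × F × F // ¬(t.1 = 0 ∧ t.2.1 = 0 ∧ t.2.2 = 0) ∧
          t.1^d + t.2.1^d + t.2.2^d + (t.1 + t.2.1 + t.2.2)^d = 0} := by
    apply Equiv.subtypeEquiv
      ((Equiv.mulLeft₀ e0 he0).prodCongr ((Equiv.mulLeft₀ e1 he1).prodCongr (Equiv.mulLeft₀ e2 he2)))
    intro t
    have k0 : (e0 * t.1)^d = t.1^d := by rw [mul_pow, h0, one_mul]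
    have k1 : (e1 * t.2.1)^d = t.2.1^d := by rw [mul_pow, h1, one_mul]
    have k2 : (e2 * t.2.2)^d = t.2.2^d := by rw [mul_pow, h2, one_mul]
    have z0 : e0 * t.1 = 0 ↔ t.1 = 0 := by
      rw [mul_eq_zero]; simp [he0]
    have z1 : e1 * t.2.1 = 0 ↔ t.2.1 = 0 := by
      rw [mul_eq_zero]; simp [he1]
    have z2 : e2 * t.2.2 = 0 ↔ t.2.2 = 0 := by
      rw [mul_eq_zero]; simp [he2]
    show _ ↔ (¬(e0 * t.1 = 0 ∧ e1 * t.2.1 = 0 ∧ e2 * t.2.2 = 0) ∧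
      (e0*t.1)^d + (e1*t.2.1)^d + (e2*t.2.2)^d + (e0*t.1 + e1*t.2.1 + e2*t.2.2)^d = 0)
    rw [k0, k1, k2, z0, z1, z2]
  have hNat : Nat.card {v : Fin 3 → F // v ≠ 0 ∧ eval v (fermatSlice F d e0 e1 e2) = 0}
      = (Finset.univ.filter (fun t : F × F × F =>
          ¬(t.1 = 0 ∧ t.2.1 = 0 ∧ t.2.2 = 0) ∧
          t.1^d + t.2.1^d + t.2.2^d + (t.1 + t.2.1 + t.2.2)^d = 0)).card := by
    rw [Nat.card_congr (e4.trans e5), Nat.card_eq_fintype_card, Fintype.card_subtype]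
  have hmain := count_triples (F := F) hF2 hm1 hpow hinj
  set Np : ℕ := Nat.card {x : Projectivization F (Fin 3 → F) //
      MvPolynomial.eval x.rep (fermatSlice F d e0 e1 e2) = 0} with hNp
  have hq1 : ((Fintype.card F : ℤ) - 1) ≠ 0 := by
    have : (5 : ℤ) ≤ (Fintype.card F : ℤ) := by exact_mod_cast hq5
    omega
  have hcast : ((Finset.univ.filter (fun t : F × F × F =>
          ¬(t.1 = 0 ∧ t.2.1 = 0 ∧ t.2.2 = 0) ∧
          t.1^d + t.2.1^d + t.2.2^d + (t.1 + t.2.1 + t.2.2)^d = 0)).card : ℤ)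
      = (Np : ℤ) * ((Fintype.card F : ℤ) - 1) := by
    rw [← hNat, hcount]
    have hu : (Nat.card Fˣ : ℤ) = (Fintype.card F : ℤ) - 1 := by
      rw [Nat.card_eq_fintype_card, Fintype.card_units]
      have : 1 ≤ Fintype.card F := by omega
      push_cast [Nat.cast_sub this]
      ring
    push_cast
    rw [hu]
  rw [hcast] at hmain
  have hfinal : ((8:ℤ) * (Np : ℤ)) * ((Fintype.card F : ℤ) - 1)
      = (3 * ((Fintype.card F : ℤ) - 1)^2) * ((Fintype.card F : ℤ) - 1) := by
    linear_combination hmain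
  have hNp8 : (8:ℤ) * (Np : ℤ) = 3 * ((Fintype.card F : ℤ) - 1)^2 :=
    mul_right_cancel₀ hq1 hfinal
  rw [hcard] at hNp8
  push_cast at hNp8 ⊢
  linarith [hNp8]
end
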